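/- arXiv:2409.04431 — 4 statements merged into one kernel-verified Lean document; each statement's English description precedes it below -/
import Mathlib

section
/- Let n ≥ 2, let 0 ≤ l_1 < l_2 < … < l_n be reals, let c > 1, define s_j = (∑_{k=1}^n l_k) - l_j, and define l̃_j = l_j + c·s_j + ∑_{i=0}^{j-2} c^{i+2} ∑_{k=i}^{j-2} C(k,i)·s_{k-i+1}. Then the sequence (l̃_j)_{j=1}^n is strictly increasing: l̃_j > l̃_{j-1} for all 2 ≤ j ≤ n. -/
open Finset

/-- The sequence l̃_j produced by the selective shifts is strictly increasing. -/
theorem ltilde_strict_mono (n : ℕ) (hn : 2 ≤ n) (c : ℝ) (hc : 1 < c)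
    (l s lt : ℕ → ℝ)
    (hl0 : 0 ≤ l 1)
    (hmono : ∀ j, 2 ≤ j → j ≤ n → l (j - 1) < l j)
    (hs : ∀ j, s j = (∑ k ∈ Finset.Icc 1 n, l k) - l j)
    (hlt : ∀ j, lt j = l j + c * s j +
      ∑ i ∈ Finset.range (j - 1), c ^ (i + 2) *
        ∑ k ∈ Finset.Icc i (j - 2), (Nat.choose k i : ℝ) * s (k - i + 1)) :
    ∀ j, 2 ≤ j → j ≤ n → lt (j - 1) < lt j := by
  -- nonnegativity of l on [1, n]
  have hlnn : ∀ k, 1 ≤ k → k ≤ n → 0 ≤ l k := by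
    intro k
    induction k with
    | zero => intro h; omega
    | succ m ih =>
      intro h1 hn'
      rcases Nat.eq_zero_or_pos m with hm | hm
      · subst hm; exact hl0
      · have h := hmono (m + 1) (by omega) hn'
        have : (m + 1) - 1 = m := rfl
        rw [this] at h
        have := ih (by omega) (by omega)
        linarith
  -- nonnegativity of s on [1, n]
  have hsnn : ∀ t, 1 ≤ t → t ≤ n → 0 ≤ s t := by
    intro t ht1 htn
    rw [hs]
    have : l t ≤ ∑ k ∈ Finset.Icc 1 n, l k := by
      apply Finset.single_le_sum (fun k hk => ?_) (by simp [Finset.mem_Icc]; omega)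
      simp only [Finset.mem_Icc] at hk
      exact hlnn k hk.1 hk.2
    linarith
  intro j hj2 hjn
  obtain ⟨m, rfl⟩ : ∃ m, j = m + 2 := ⟨j - 2, by omega⟩
  have hmn : m + 2 ≤ n := hjn
  have hd : l (m + 1) < l (m + 2) := by
    have := hmono (m + 2) (by omega) hjn
    simpa using this
  have hl1nn : 0 ≤ l (m + 1) := hlnn (m + 1) (by omega) (by omega)
  -- s (m+1) ≥ l (m+2)
  have hsl : l (m + 2) ≤ s (m + 1) := by
    rw [hs]
    have hpair : ∑ k ∈ ({m + 1, m + 2} : Finset ℕ), l k ≤ ∑ k ∈ Finset.Icc 1 n, l k := by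
      apply Finset.sum_le_sum_of_subset_of_nonneg
      · intro x hx
        simp only [Finset.mem_insert, Finset.mem_singleton] at hx
        simp only [Finset.mem_Icc]
        omega
      · intro k hk _
        simp only [Finset.mem_Icc] at hk
        exact hlnn k hk.1 hk.2
    rw [Finset.sum_pair (by omega : m + 1 ≠ m + 2)] at hpair
    linarith
  have hss : s (m + 2) - s (m + 1) = l (m + 1) - l (m + 2) := by
    rw [hs, hs]; ring
  -- key sum identity
  have key : ∑ i ∈ Finset.range (m + 1), c ^ (i + 2) *
        ∑ k ∈ Finset.Icc i m, (Nat.choose k i : ℝ) * s (k - i + 1)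
      = (∑ i ∈ Finset.range m, c ^ (i + 2) *
          ∑ k ∈ Finset.Icc i (m - 1), (Nat.choose k i : ℝ) * s (k - i + 1))
        + ∑ i ∈ Finset.range (m + 1), c ^ (i + 2) *
            ((Nat.choose m i : ℝ) * s (m - i + 1)) := by
    rw [Finset.sum_range_succ, Finset.sum_range_succ
      (f := fun i => c ^ (i + 2) * ((Nat.choose m i : ℝ) * s (m - i + 1)))]
    have hlast : c ^ (m + 2) * ∑ k ∈ Finset.Icc m m, (Nat.choose k m : ℝ) * s (k - m + 1)
        = c ^ (m + 2) * ((Nat.choose m m : ℝ) * s (m - m + 1)) := by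
      rw [Finset.Icc_self, Finset.sum_singleton]
    rw [hlast, ← add_assoc]
    congr 1
    rw [← Finset.sum_add_distrib]
    have hcong : ∀ i ∈ Finset.range m,
        c ^ (i + 2) * ∑ k ∈ Finset.Icc i m, (Nat.choose k i : ℝ) * s (k - i + 1)
        = c ^ (i + 2) * ∑ k ∈ Finset.Icc i (m - 1), (Nat.choose k i : ℝ) * s (k - i + 1)
          + c ^ (i + 2) * ((Nat.choose m i : ℝ) * s (m - i + 1)) := by
      intro i hi
      simp only [Finset.mem_range] at hi
      have h1 : m - 1 + 1 = m := by omega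
      have hsplit : ∑ k ∈ Finset.Icc i m, (Nat.choose k i : ℝ) * s (k - i + 1)
          = (∑ k ∈ Finset.Icc i (m - 1), (Nat.choose k i : ℝ) * s (k - i + 1))
            + (Nat.choose m i : ℝ) * s (m - i + 1) := by
        calc ∑ k ∈ Finset.Icc i m, (Nat.choose k i : ℝ) * s (k - i + 1)
            = ∑ k ∈ Finset.Icc i (m - 1 + 1), (Nat.choose k i : ℝ) * s (k - i + 1) := by
              rw [h1]
          _ = (∑ k ∈ Finset.Icc i (m - 1), (Nat.choose k i : ℝ) * s (k - i + 1))
              + (Nat.choose (m - 1 + 1) i : ℝ) * s (m - 1 + 1 - i + 1) := by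
              rw [Finset.sum_Icc_succ_top (by omega)]
          _ = (∑ k ∈ Finset.Icc i (m - 1), (Nat.choose k i : ℝ) * s (k - i + 1))
              + (Nat.choose m i : ℝ) * s (m - i + 1) := by rw [h1]
      rw [hsplit]; ring
    exact Finset.sum_congr rfl hcong
  -- the extra sum dominates c^2 * s (m+1)
  have hD : c ^ 2 * s (m + 1) ≤ ∑ i ∈ Finset.range (m + 1), c ^ (i + 2) *
      ((Nat.choose m i : ℝ) * s (m - i + 1)) := by
    have hnn : ∀ i ∈ Finset.range (m + 1),
        0 ≤ c ^ (i + 2) * ((Nat.choose m i : ℝ) * s (m - i + 1)) := by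
      intro i hi
      simp only [Finset.mem_range] at hi
      have hsn : 0 ≤ s (m - i + 1) := hsnn (m - i + 1) (by omega) (by omega)
      have hc0 : (0:ℝ) < c := by linarith
      positivity
    have h := Finset.single_le_sum hnn (Finset.mem_range.mpr (Nat.succ_pos m))
    simpa using h
  have hlts := hlt (m + 1)
  have hltj := hlt (m + 2)
  have e1 : (m + 1) - 1 = m := rfl
  have e2 : (m + 2) - 1 = m + 1 := rfl
  have e3 : (m + 2) - 2 = m := rfl
  have e4 : (m + 1) - 2 = m - 1 := rfl
  rw [e1, e4] at hlts
  rw [e2, e3] at hltj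
  show lt (m + 1) < lt (m + 2)
  rw [hlts, hltj, key]
  nlinarith [sq_nonneg (c - 1), hsnn (m + 1) (by omega) (by omega)]
end

section
/- With the same setup (δ > 0 with δ^{-1} ∈ ℕ, d ≥ 1, n ≥ 4, ordered grid values l_1 < … < l_n in {0, δ, …, δ^{-d+1} - δ}, s_j = ∑_k l_k - l_j, l̃_j = l_j + c·s_j + ∑_{i=0}^{j-2} c^{i+2} ∑_{k=i}^{j-2} C(k,i)·s_{k-i+1}, and c > (n-1)(δ^{-d}-1)·C(n-1, ⌈(n-1)/2⌉)), one has the upper bound l̃_j < c^{j+1}·δ for every j with 1 < j < n. -/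
open Finset

set_option maxHeartbeats 1000000 in
/-- Upper bound: under the constraint on c (n ≥ 4), each l̃_j with 1 < j < n
satisfies l̃_j < c^{j+1}·δ. -/
theorem ltilde_upper_bound (n d N : ℕ) (hn : 4 ≤ n) (hd : 1 ≤ d) (hN : 1 ≤ N)
    (δ : ℝ) (hδ : δ > 0) (hδN : (N : ℝ) = δ⁻¹)
    (l s lt : ℕ → ℝ) (c : ℝ)
    (hgrid : ∀ j, 1 ≤ j → j ≤ n → ∃ m : ℕ, m < N ^ d ∧ l j = (m : ℝ) * δ)
    (hmono : ∀ j, 2 ≤ j → j ≤ n → l (j - 1) < l j)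
    (hc : c > ((n : ℝ) - 1) * ((δ⁻¹) ^ d - 1) * Nat.choose (n - 1) ((n - 1 + 1) / 2))
    (hs : ∀ j, s j = (∑ k ∈ Finset.Icc 1 n, l k) - l j)
    (hlt : ∀ j, lt j = l j + c * s j +
      ∑ i ∈ Finset.range (j - 1), c ^ (i + 2) *
        ∑ k ∈ Finset.Icc i (j - 2), (Nat.choose k i : ℝ) * s (k - i + 1)) :
    ∀ j, 1 < j → j < n → lt j < c ^ (j + 1) * δ := by
  intro j hj1 hjn
  set E : ℝ := (δ⁻¹) ^ d - 1 with hEdef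
  have hNd : ((N ^ d : ℕ) : ℝ) = (δ⁻¹) ^ d := by push_cast [hδN]; ring
  have hE0 : 0 ≤ E := by
    have h1 : (1 : ℕ) ≤ N ^ d := Nat.one_le_pow _ _ hN
    have : (1 : ℝ) ≤ ((N ^ d : ℕ) : ℝ) := by exact_mod_cast h1
    rw [hEdef, ← hNd]; linarith
  -- bounds on l
  have hl : ∀ k, 1 ≤ k → k ≤ n → 0 ≤ l k ∧ l k ≤ E * δ := by
    intro k hk1 hk2
    obtain ⟨m, hm, hml⟩ := hgrid k hk1 hk2
    have hm' : ((m : ℝ)) ≤ E := by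
      rw [hEdef, ← hNd]
      have : (m : ℕ) + 1 ≤ N ^ d := hm
      have := (Nat.cast_le (α := ℝ)).mpr this
      push_cast at this ⊢; linarith
    constructor
    · rw [hml]; positivity
    · rw [hml]; exact mul_le_mul_of_nonneg_right hm' hδ.le
  -- bounds on s
  have hsb : ∀ m, 1 ≤ m → m ≤ n → 0 ≤ s m ∧ s m ≤ ((n : ℝ) - 1) * E * δ := by
    intro m hm1 hm2
    have hmem : m ∈ Finset.Icc 1 n := Finset.mem_Icc.mpr ⟨hm1, hm2⟩
    have hsplit : (∑ k ∈ Finset.Icc 1 n, l k) =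
        l m + ∑ k ∈ (Finset.Icc 1 n).erase m, l k :=
      (Finset.add_sum_erase _ _ hmem).symm
    have hsm : s m = ∑ k ∈ (Finset.Icc 1 n).erase m, l k := by
      rw [hs m, hsplit]; ring
    have hcard : ((Finset.Icc 1 n).erase m).card = n - 1 := by
      rw [Finset.card_erase_of_mem hmem, Nat.card_Icc]; omega
    constructor
    · rw [hsm]
      apply Finset.sum_nonneg
      intro k hk
      have hk' := Finset.mem_of_mem_erase hk
      rw [Finset.mem_Icc] at hk'
      exact (hl k hk'.1 hk'.2).1
    · rw [hsm]
      calc ∑ k ∈ (Finset.Icc 1 n).erase m, l k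
          ≤ ∑ k ∈ (Finset.Icc 1 n).erase m, E * δ := by
            apply Finset.sum_le_sum
            intro k hk
            have hk' := Finset.mem_of_mem_erase hk
            rw [Finset.mem_Icc] at hk'
            exact (hl k hk'.1 hk'.2).2
        _ = ((n : ℝ) - 1) * E * δ := by
            rw [Finset.sum_const, hcard, nsmul_eq_mul]
            have : ((n - 1 : ℕ) : ℝ) = (n : ℝ) - 1 := by
              have : (1 : ℕ) ≤ n := by omega
              push_cast [Nat.cast_sub this]; ring
            rw [this]; ring
  -- the binomial constant
  set Bn : ℕ := Nat.choose (n - 1) ((n - 1 + 1) / 2) with hBdef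
  have hBn2 : Bn = Nat.choose (n - 1) (n / 2) := by
    rw [hBdef]; congr 1; omega
  have hBmax : ∀ r, Nat.choose (n - 1) r ≤ Bn := by
    intro r
    rw [hBn2]
    have h1 : Nat.choose (n - 1) ((n - 1) / 2) = Nat.choose (n - 1) (n / 2) := by
      have hk : (n - 1) / 2 ≤ n - 1 := Nat.div_le_self _ _
      rw [← Nat.choose_symm hk]
      congr 1; omega
    rw [← h1]
    exact Nat.choose_le_middle r (n - 1)
  have hB3 : 3 ≤ Bn := by
    rw [hBn2]
    have h1 : n / 2 + 1 ≤ n - 1 := by omega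
    calc 3 ≤ n / 2 + 1 := by omega
      _ = Nat.choose (n / 2 + 1) (n / 2) := (Nat.choose_succ_self_right _).symm
      _ ≤ Nat.choose (n - 1) (n / 2) := Nat.choose_le_choose _ h1
  have hcAB : ((n : ℝ) - 1) * E * (Bn : ℝ) < c := hc
  have hn1 : (3 : ℝ) ≤ (n : ℝ) - 1 := by
    have : (4 : ℝ) ≤ (n : ℝ) := by exact_mod_cast hn
    linarith
  -- dichotomy on E
  have hEcases : E = 0 ∨ 1 ≤ E := by
    have h1 : (1 : ℕ) ≤ N ^ d := Nat.one_le_pow _ _ hN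
    rcases Nat.lt_or_ge (N ^ d) 2 with h | h
    · left
      have : N ^ d = 1 := by omega
      rw [hEdef, ← hNd, this]; norm_num
    · right
      have : (2 : ℝ) ≤ ((N ^ d : ℕ) : ℝ) := by exact_mod_cast h
      rw [hEdef, ← hNd]; linarith
  rcases hEcases with hEz | hE1
  · -- degenerate case: everything is zero
    have hc0 : 0 < c := by
      have : ((n : ℝ) - 1) * E * (Bn : ℝ) = 0 := by rw [hEz]; ring
      linarith [hcAB, this.symm.le]
    have hszero : ∀ m, 1 ≤ m → m ≤ n → s m = 0 := by
      intro m hm1 hm2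
      have := hsb m hm1 hm2
      have h2 : ((n : ℝ) - 1) * E * δ = 0 := by rw [hEz]; ring
      linarith [this.1, this.2]
    have hlj : l j = 0 := by
      have := hl j (by omega) (by omega)
      have h2 : E * δ = 0 := by rw [hEz]; ring
      linarith [this.1, this.2]
    have hltz : lt j = 0 := by
      rw [hlt j, hlj, hszero j (by omega) (by omega)]
      have : ∀ i ∈ Finset.range (j - 1), c ^ (i + 2) *
          ∑ k ∈ Finset.Icc i (j - 2), (Nat.choose k i : ℝ) * s (k - i + 1) = 0 := by
        intro i hi
        rw [Finset.mem_range] at hi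
        have : ∑ k ∈ Finset.Icc i (j - 2), (Nat.choose k i : ℝ) * s (k - i + 1) = 0 := by
          apply Finset.sum_eq_zero
          intro k hk
          rw [Finset.mem_Icc] at hk
          rw [hszero (k - i + 1) (by omega) (by omega)]
          ring
        rw [this]; ring
      rw [Finset.sum_eq_zero this]; ring
    rw [hltz]
    positivity
  · -- main case
    set A : ℝ := ((n : ℝ) - 1) * E with hAdef
    have hA3 : 3 ≤ A := by
      rw [hAdef]; nlinarith
    have hB3' : (3 : ℝ) ≤ (Bn : ℝ) := by exact_mod_cast hB3
    have hc9 : 9 < c := by nlinarith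
    have hc0 : 0 < c := by linarith
    have hc2 : 2 ≤ c := by linarith
    -- geometric sum bound
    have geo : ∀ m : ℕ, ∑ i ∈ Finset.range m, c ^ (i + 2) ≤ 2 * c ^ (m + 1) := by
      intro m
      induction m with
      | zero => simp; positivity
      | succ m ih =>
        rw [Finset.sum_range_succ]
        have h1 : 2 * c ^ (m + 1) ≤ c * c ^ (m + 1) := by
          apply mul_le_mul_of_nonneg_right hc2 (by positivity)
        have h2 : c * c ^ (m + 1) = c ^ (m + 2) := by ring
        calc (∑ i ∈ Finset.range m, c ^ (i + 2)) + c ^ (m + 2)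
            ≤ 2 * c ^ (m + 1) + c ^ (m + 2) := by linarith
          _ ≤ c ^ (m + 2) + c ^ (m + 2) := by linarith [h1, h2]
          _ = 2 * c ^ (m + 2) := by ring
    -- bound on the inner sums, for i < j - 2
    have hT : ∀ i, i ∈ Finset.range (j - 2) →
        (∑ k ∈ Finset.Icc i (j - 2), (Nat.choose k i : ℝ) * s (k - i + 1))
          ≤ (Bn : ℝ) * (A * δ) := by
      intro i _
      have step1 : (∑ k ∈ Finset.Icc i (j - 2), (Nat.choose k i : ℝ) * s (k - i + 1))
          ≤ ∑ k ∈ Finset.Icc i (j - 2), (Nat.choose k i : ℝ) * (A * δ) := by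
        apply Finset.sum_le_sum
        intro k hk
        rw [Finset.mem_Icc] at hk
        have hsk := hsb (k - i + 1) (by omega) (by omega)
        have : (0 : ℝ) ≤ (Nat.choose k i : ℝ) := by positivity
        rw [hAdef]
        exact mul_le_mul_of_nonneg_left hsk.2 this
      have step2 : ∑ k ∈ Finset.Icc i (j - 2), (Nat.choose k i : ℝ) * (A * δ)
          = ((Nat.choose (j - 1) (i + 1) : ℕ) : ℝ) * (A * δ) := by
        rw [← Finset.sum_mul]
        congr 1
        rw [← Nat.cast_sum]
        congr 1
        have := Nat.sum_Icc_choose (j - 2) i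
        rw [this]
        congr 1
        omega
      have step3 : ((Nat.choose (j - 1) (i + 1) : ℕ) : ℝ) ≤ (Bn : ℝ) := by
        have h1 : Nat.choose (j - 1) (i + 1) ≤ Nat.choose (n - 1) (i + 1) :=
          Nat.choose_le_choose _ (by omega)
        have h2 := hBmax (i + 1)
        exact_mod_cast le_trans h1 h2
      have hAδ : 0 ≤ A * δ := by positivity
      calc (∑ k ∈ Finset.Icc i (j - 2), (Nat.choose k i : ℝ) * s (k - i + 1))
          ≤ ((Nat.choose (j - 1) (i + 1) : ℕ) : ℝ) * (A * δ) := by rw [← step2]; exact step1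
        _ ≤ (Bn : ℝ) * (A * δ) := mul_le_mul_of_nonneg_right step3 hAδ
    -- top term
    have hTop : (∑ k ∈ Finset.Icc (j - 2) (j - 2), (Nat.choose k (j - 2) : ℝ) * s (k - (j - 2) + 1))
        ≤ A * δ := by
      rw [Finset.Icc_self, Finset.sum_singleton, Nat.choose_self, Nat.sub_self]
      simp only [Nat.cast_one, one_mul]
      have := hsb 1 le_rfl (by omega)
      rw [hAdef]
      exact this.2
    -- main chain
    have hmain : lt j ≤ E * δ + c * (A * δ) + 2 * c ^ (j - 1) * ((Bn : ℝ) * (A * δ))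
        + c ^ j * (A * δ) := by
      rw [hlt j]
      have hrange : j - 1 = (j - 2) + 1 := by omega
      rw [hrange, Finset.sum_range_succ]
      have hb1 : l j ≤ E * δ := (hl j (by omega) (by omega)).2
      have hb2 : c * s j ≤ c * (A * δ) := by
        apply mul_le_mul_of_nonneg_left _ hc0.le
        rw [hAdef]
        exact (hsb j (by omega) (by omega)).2
      have hb3 : ∑ i ∈ Finset.range (j - 2), c ^ (i + 2) *
            ∑ k ∈ Finset.Icc i (j - 2), (Nat.choose k i : ℝ) * s (k - i + 1)
          ≤ 2 * c ^ ((j - 2) + 1) * ((Bn : ℝ) * (A * δ)) := by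
        calc ∑ i ∈ Finset.range (j - 2), c ^ (i + 2) *
              ∑ k ∈ Finset.Icc i (j - 2), (Nat.choose k i : ℝ) * s (k - i + 1)
            ≤ ∑ i ∈ Finset.range (j - 2), c ^ (i + 2) * ((Bn : ℝ) * (A * δ)) := by
              apply Finset.sum_le_sum
              intro i hi
              exact mul_le_mul_of_nonneg_left (hT i hi) (by positivity)
          _ = (∑ i ∈ Finset.range (j - 2), c ^ (i + 2)) * ((Bn : ℝ) * (A * δ)) := by
              rw [Finset.sum_mul]
          _ ≤ 2 * c ^ ((j - 2) + 1) * ((Bn : ℝ) * (A * δ)) := by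
              apply mul_le_mul_of_nonneg_right (geo (j - 2)) (by positivity)
      have hb4 : c ^ ((j - 2) + 2) *
            (∑ k ∈ Finset.Icc (j - 2) (j - 2), (Nat.choose k (j - 2) : ℝ) * s (k - (j - 2) + 1))
          ≤ c ^ j * (A * δ) := by
        have hjj : (j - 2) + 2 = j := by omega
        rw [hjj]
        exact mul_le_mul_of_nonneg_left hTop (by positivity)
      linarith
    -- final arithmetic
    have hX : c ≤ c ^ (j - 1) := by
      calc c = c ^ 1 := (pow_one c).symm
        _ ≤ c ^ (j - 1) := pow_le_pow_right₀ (by linarith) (by omega)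
    set X : ℝ := c ^ (j - 1) with hXdef
    have hX0 : 0 < X := by positivity
    have hcj : c ^ j = X * c := by
      rw [hXdef, ← pow_succ]
      congr 1; omega
    have hcj1 : c ^ (j + 1) = X * c ^ 2 := by
      rw [hXdef, ← pow_add]
      congr 1; omega
    rw [hcj1]
    have key : E + A * c + 2 * X * ((Bn : ℝ) * A) + X * c * A < X * c ^ 2 := by
      have h3A' : 3 * A ≤ A * (Bn : ℝ) := by nlinarith
      have h3A : 3 * A < c := by linarith
      have hEA : E ≤ A := by nlinarith
      have hX1 : (1 : ℝ) ≤ X := by linarith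
      have q1 : 3 * A * c < c * c := mul_lt_mul_of_pos_right h3A hc0
      have q3 : X * c * (3 * A) < X * c * c := mul_lt_mul_of_pos_left h3A (mul_pos hX0 hc0)
      have q2 : X * (A * (Bn : ℝ)) < X * c := mul_lt_mul_of_pos_left hcAB hX0
      have r3 : 9 * c < c * c := mul_lt_mul_of_pos_right hc9 hc0
      have r2 : X * (9 * c) < X * (c * c) := mul_lt_mul_of_pos_left r3 hX0
      have r1 : 1 * (c * c) ≤ X * (c * c) :=
        mul_le_mul_of_nonneg_right hX1 (by positivity)
      linarith
    calc lt j ≤ E * δ + c * (A * δ) + 2 * X * ((Bn : ℝ) * (A * δ)) + X * c * (A * δ) := by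
          rw [← hcj]; exact hmain
      _ = (E + A * c + 2 * X * ((Bn : ℝ) * A) + X * c * A) * δ := by ring
      _ < (X * c ^ 2) * δ := by
          apply mul_lt_mul_of_pos_right key hδ
end

section
/- Injectivity of the final-coordinate map: let δ > 0 with δ^{-1} ∈ ℕ, d ≥ 1, n ≥ 2, and let c > (n-1)(δ^{-d} - 1)·C(n-1, ⌈(n-1)/2⌉). For ordered sequences l = (l_1 < … < l_n) with l_j ∈ {0, δ, …, δ^{-d+1} - δ}, define s_j = ∑_k l_k - l_j and l̃_n(l) = l_n + c·s_n + ∑_{i=0}^{n-2} c^{i+2} ∑_{k=i}^{n-2} C(k,i)·s_{k-i+1}. Then the map l ↦ l̃_n(l) is injective: if l ≠ l' then l̃_n(l) ≠ l̃_n(l'). -/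
open Finset

/-- Sums of integer multiples of `δ` are integer multiples of `δ`. -/
lemma sum_grid_aux {δ : ℝ} (t : Finset ℕ) (g : ℕ → ℝ)
    (h : ∀ k ∈ t, ∃ z : ℤ, g k = z * δ) :
    ∃ z : ℤ, ∑ k ∈ t, g k = z * δ := by
  classical
  induction t using Finset.induction_on with
  | empty => exact ⟨0, by simp⟩
  | @insert x t hx ih =>
    obtain ⟨z1, hz1⟩ := h x (Finset.mem_insert_self x t)
    obtain ⟨z2, hz2⟩ := ih (fun k hk => h k (Finset.mem_insert_of_mem hk))
    exact ⟨z1 + z2, by rw [Finset.sum_insert (by assumption), hz1, hz2]; push_cast; ring⟩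

/-- If a polynomial in `c` with coefficients that are integer multiples of `δ`,
bounded by `B*δ` with `B ≤ c - 1`, vanishes, then all coefficients vanish. -/
lemma poly_vanish_aux (δ c B : ℝ) (hδ : 0 < δ) (hc1 : 1 < c) (hB0 : 0 ≤ B)
    (hBc : B ≤ c - 1) (a : ℕ → ℝ) (hint : ∀ p, ∃ z : ℤ, a p = z * δ)
    (hbd : ∀ p, |a p| ≤ B * δ) :
    ∀ t, (∑ p ∈ Finset.range t, a p * c ^ p) = 0 → ∀ p, p < t → a p = 0 := by
  intro t
  induction t with
  | zero => intro _ p hp; omega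
  | succ t ih =>
    intro hsum p hp
    have hc0 : 0 < c := by linarith
    have hct : 0 < c ^ t := pow_pos hc0 t
    have hat : a t = 0 := by
      have h1 : a t * c ^ t = -∑ p ∈ Finset.range t, a p * c ^ p := by
        rw [Finset.sum_range_succ] at hsum; linarith
      have h2 : |a t| * c ^ t ≤ B * δ * ∑ p ∈ Finset.range t, c ^ p := by
        calc |a t| * c ^ t = |a t * c ^ t| := by
              rw [abs_mul, abs_of_pos hct]
          _ = |∑ p ∈ Finset.range t, a p * c ^ p| := by rw [h1, abs_neg]
          _ ≤ ∑ p ∈ Finset.range t, |a p * c ^ p| := Finset.abs_sum_le_sum_abs _ _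
          _ ≤ ∑ p ∈ Finset.range t, B * δ * c ^ p := by
              apply Finset.sum_le_sum
              intro i _
              rw [abs_mul, abs_of_pos (pow_pos hc0 i)]
              exact mul_le_mul_of_nonneg_right (hbd i) (le_of_lt (pow_pos hc0 i))
          _ = B * δ * ∑ p ∈ Finset.range t, c ^ p := by rw [Finset.mul_sum]
      have hgeo : (c - 1) * ∑ p ∈ Finset.range t, c ^ p = c ^ t - 1 := by
        rw [geom_sum_eq (by intro h; rw [h] at hc1; exact lt_irrefl 1 hc1) t, mul_comm,
          div_mul_cancel₀ _ (by intro h; rw [sub_eq_zero] at h; rw [← h] at hc1; exact lt_irrefl c hc1 : c - 1 ≠ 0)]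
      have hgeo0 : 0 ≤ ∑ p ∈ Finset.range t, c ^ p :=
        Finset.sum_nonneg fun i _ => le_of_lt (pow_pos hc0 i)
      have h3 : |a t| * c ^ t ≤ δ * (c ^ t - 1) := by
        calc |a t| * c ^ t ≤ B * δ * ∑ p ∈ Finset.range t, c ^ p := h2
          _ ≤ (c - 1) * δ * ∑ p ∈ Finset.range t, c ^ p := by
              apply mul_le_mul_of_nonneg_right _ hgeo0
              exact mul_le_mul_of_nonneg_right hBc (le_of_lt hδ)
          _ = δ * ((c - 1) * ∑ p ∈ Finset.range t, c ^ p) := by ring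
          _ = δ * (c ^ t - 1) := by rw [hgeo]
      have h4 : |a t| < δ := by
        nlinarith [abs_nonneg (a t)]
      obtain ⟨z, hz⟩ := hint t
      have h5 : |(z : ℝ)| < 1 := by
        rw [hz, abs_mul, abs_of_pos hδ] at h4
        nlinarith [abs_nonneg ((z:ℝ))]
      have h6 : z = 0 := by
        have hz1 : |z| < 1 := by exact_mod_cast (by rwa [← Int.cast_abs] at h5 : ((|z| : ℤ) : ℝ) < 1)
        rcases abs_lt.mp hz1 with ⟨ha, hb⟩
        omega
      rw [hz, h6]; simp
    rcases Nat.lt_succ_iff_lt_or_eq.mp hp with h | h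
    · apply ih _ _ h
      rw [Finset.sum_range_succ, hat] at hsum
      simpa using hsum
    · rw [h]; exact hat

/-- Grid + monotonicity gives linear lower and upper bounds. -/
lemma seq_facts_aux (n E : ℕ) (hn : 2 ≤ n) (δ : ℝ) (hδ : 0 < δ) (f : ℕ → ℝ)
    (hgrid : ∀ j, 1 ≤ j → j ≤ n → ∃ m : ℕ, m < E ∧ f j = (m : ℝ) * δ)
    (hmono : ∀ j, 2 ≤ j → j ≤ n → f (j - 1) < f j) :
    ∀ j, 1 ≤ j → j ≤ n →
      ((j : ℝ) - 1) * δ ≤ f j ∧ f j + ((n : ℝ) - j) * δ ≤ ((E : ℝ) - 1) * δ := by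
  have hstep : ∀ j, 2 ≤ j → j ≤ n → f (j - 1) + δ ≤ f j := by
    intro j h2 hjn
    obtain ⟨m1, _, hm1⟩ := hgrid (j - 1) (by omega) (by omega)
    obtain ⟨m2, _, hm2⟩ := hgrid j (by omega) hjn
    have hlt := hmono j h2 hjn
    rw [hm1, hm2] at hlt ⊢
    have hmm : (m1 : ℝ) < m2 := by
      by_contra h
      push_neg at h
      nlinarith
    have hmm' : m1 + 1 ≤ m2 := by exact_mod_cast Nat.succ_le_of_lt (by exact_mod_cast hmm)
    have : ((m1 : ℝ) + 1) ≤ (m2 : ℝ) := by exact_mod_cast hmm'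
    nlinarith
  have hchain : ∀ j1, 1 ≤ j1 → ∀ j2, j1 ≤ j2 → j2 ≤ n →
      f j1 + ((j2 : ℝ) - (j1 : ℝ)) * δ ≤ f j2 := by
    intro j1 h1 j2 hj12
    induction j2, hj12 using Nat.le_induction with
    | base => intro _; simp
    | succ j2 hj2 ih =>
      intro hj2n
      have ha := ih (by omega)
      have hb := hstep (j2 + 1) (by omega) hj2n
      have hc : (j2 + 1 : ℕ) - 1 = j2 := by omega
      rw [hc] at hb
      push_cast
      push_cast at ha
      linarith
  intro j h1 hjn
  obtain ⟨m1, hm1E, hm1⟩ := hgrid 1 le_rfl (by omega)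
  obtain ⟨mn, hmnE, hmn⟩ := hgrid n (by omega) le_rfl
  have hl := hchain 1 le_rfl j h1 hjn
  have hu := hchain j h1 n hjn le_rfl
  constructor
  · have hf1 : 0 ≤ f 1 := by rw [hm1]; positivity
    push_cast at hl
    linarith
  · have hfn : f n ≤ ((E : ℝ) - 1) * δ := by
      rw [hmn]
      have : (mn : ℝ) ≤ (E : ℝ) - 1 := by
        have h' : (mn : ℝ) + 1 ≤ (E : ℝ) := by exact_mod_cast hmnE
        linarith
      nlinarith
    linarith

/-- Elementary bound facts used for the coefficient estimates. -/
lemma bound_facts_aux (x y z : ℝ) (hx : 1 ≤ x) (hy : x ≤ y) (hz : 1 ≤ z) :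
    1 ≤ x * y * z ∧ y - x ≤ x * y * z - 1 ∧ x * (y - x) ≤ x * y * z - 1 ∧
      z * (x * (y - x)) ≤ x * y * z - 1 := by
  have hy1 : 1 ≤ y := le_trans hx hy
  have hxy : y ≤ x * y := by nlinarith
  have hxyz : x * y ≤ x * y * z := by nlinarith
  have hx2 : 1 ≤ x * x := by nlinarith
  have hzx2 : 1 ≤ z * (x * x) := by nlinarith
  refine ⟨by linarith, by linarith, by nlinarith [hxyz, hx2], by nlinarith [hzx2, hxyz]⟩
/-- Injectivity of the final-coordinate map l ↦ l̃_n. -/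
theorem ltilde_n_injective (n d N : ℕ) (hn : 2 ≤ n) (hd : 1 ≤ d) (hN : 1 ≤ N)
    (δ : ℝ) (hδ : δ > 0) (hδN : (N : ℝ) = δ⁻¹)
    (c : ℝ)
    (hc : c > ((n : ℝ) - 1) * ((δ⁻¹) ^ d - 1) * Nat.choose (n - 1) ((n - 1 + 1) / 2))
    (l l' s s' : ℕ → ℝ)
    (hgrid : ∀ j, 1 ≤ j → j ≤ n → ∃ m : ℕ, m < N ^ d ∧ l j = (m : ℝ) * δ)
    (hgrid' : ∀ j, 1 ≤ j → j ≤ n → ∃ m : ℕ, m < N ^ d ∧ l' j = (m : ℝ) * δ)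
    (hmono : ∀ j, 2 ≤ j → j ≤ n → l (j - 1) < l j)
    (hmono' : ∀ j, 2 ≤ j → j ≤ n → l' (j - 1) < l' j)
    (hs : ∀ j, s j = (∑ k ∈ Finset.Icc 1 n, l k) - l j)
    (hs' : ∀ j, s' j = (∑ k ∈ Finset.Icc 1 n, l' k) - l' j)
    (hne : ∃ j, 1 ≤ j ∧ j ≤ n ∧ l j ≠ l' j) :
    l n + c * s n + (∑ i ∈ Finset.range (n - 1), c ^ (i + 2) *
        ∑ k ∈ Finset.Icc i (n - 2), (Nat.choose k i : ℝ) * s (k - i + 1)) ≠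
    l' n + c * s' n + (∑ i ∈ Finset.range (n - 1), c ^ (i + 2) *
        ∑ k ∈ Finset.Icc i (n - 2), (Nat.choose k i : ℝ) * s' (k - i + 1)) := by
  intro heq
  classical
  set E : ℕ := N ^ d with hE
  set Cm : ℝ := (Nat.choose (n - 1) ((n - 1 + 1) / 2) : ℝ) with hCmdef
  have hEr : ((δ : ℝ)⁻¹) ^ d = ((E : ℕ) : ℝ) := by
    rw [← hδN, hE]; push_cast; ring
  have hcK : ((n : ℝ) - 1) * ((E : ℝ) - 1) * Cm < c := by
    rw [hEr] at hc; exact hc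
  have hn1 : (1 : ℝ) ≤ (n : ℝ) - 1 := by
    have : (2 : ℝ) ≤ (n : ℝ) := by exact_mod_cast hn
    linarith
  have hCm1 : (1 : ℝ) ≤ Cm := by
    have : 0 < Nat.choose (n - 1) ((n - 1 + 1) / 2) := Nat.choose_pos (by omega)
    rw [hCmdef]; exact_mod_cast this
  -- bounds from monotonicity
  have hbl := seq_facts_aux n E hn δ hδ l hgrid hmono
  have hbl' := seq_facts_aux n E hn δ hδ l' hgrid' hmono'
  have hE1 : (n : ℝ) - 1 ≤ (E : ℝ) - 1 := by
    obtain ⟨h1, h2⟩ := hbl 1 le_rfl (by omega)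
    have h0 : (0 : ℝ) ≤ l 1 := by push_cast at h1; linarith
    push_cast at h2
    nlinarith
  have hE1' : (1 : ℝ) ≤ (E : ℝ) - 1 := le_trans hn1 hE1
  have hW0 : 0 ≤ ((E : ℝ) - 1) - ((n : ℝ) - 1) := by linarith
  obtain ⟨bf1, bf2, bf3, bf4⟩ :=
    bound_facts_aux ((n : ℝ) - 1) ((E : ℝ) - 1) Cm hn1 hE1 hCm1
  have hblam : ∀ j, 1 ≤ j → j ≤ n → |l j - l' j| ≤ (((E : ℝ) - 1) - ((n : ℝ) - 1)) * δ := by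
    intro j h1 h2
    obtain ⟨ha1, ha2⟩ := hbl j h1 h2
    obtain ⟨hb1, hb2⟩ := hbl' j h1 h2
    have hexp : (((E : ℝ) - 1) - ((n : ℝ) - 1)) * δ
        = ((E : ℝ) - 1) * δ - ((n : ℝ) - (j : ℝ)) * δ - ((j : ℝ) - 1) * δ := by
      ring
    rw [abs_le]
    constructor
    · linarith [hexp]
    · linarith [hexp]
  have hZlam : ∀ j, 1 ≤ j → j ≤ n → ∃ z : ℤ, l j - l' j = (z : ℝ) * δ := by
    intro j h1 h2
    obtain ⟨m, _, hm⟩ := hgrid j h1 h2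
    obtain ⟨m', _, hm'⟩ := hgrid' j h1 h2
    exact ⟨(m : ℤ) - (m' : ℤ), by rw [hm, hm']; push_cast; ring⟩
  -- representation of s j - s' j
  have hrepσ : ∀ j, 1 ≤ j → j ≤ n →
      s j - s' j = ∑ k ∈ (Finset.Icc 1 n).erase j, (l k - l' k) := by
    intro j h1 h2
    have hj : j ∈ Finset.Icc 1 n := Finset.mem_Icc.mpr ⟨h1, h2⟩
    have h := Finset.add_sum_erase (Finset.Icc 1 n) (fun k => l k - l' k) hj
    have hsub : ∑ k ∈ Finset.Icc 1 n, (l k - l' k)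
        = (∑ k ∈ Finset.Icc 1 n, l k) - ∑ k ∈ Finset.Icc 1 n, l' k :=
      Finset.sum_sub_distrib _ _
    rw [hs j, hs' j]
    linarith
  have hcard : ∀ j ∈ Finset.Icc 1 n, ((Finset.Icc 1 n).erase j).card = n - 1 := by
    intro j hj
    rw [Finset.card_erase_of_mem hj, Nat.card_Icc]
    omega
  have hbσ : ∀ j, 1 ≤ j → j ≤ n → |s j - s' j| ≤ ((n : ℝ) - 1) * ((((E : ℝ) - 1) - ((n : ℝ) - 1)) * δ) := by
    intro j h1 h2
    rw [hrepσ j h1 h2]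
    calc |∑ k ∈ (Finset.Icc 1 n).erase j, (l k - l' k)|
        ≤ ∑ k ∈ (Finset.Icc 1 n).erase j, |l k - l' k| :=
          Finset.abs_sum_le_sum_abs _ _
      _ ≤ ∑ _k ∈ (Finset.Icc 1 n).erase j, (((E : ℝ) - 1) - ((n : ℝ) - 1)) * δ := by
          apply Finset.sum_le_sum
          intro k hk
          have hk' := Finset.mem_Icc.mp (Finset.mem_of_mem_erase hk)
          exact hblam k hk'.1 hk'.2
      _ = ((Finset.Icc 1 n).erase j).card • ((((E : ℝ) - 1) - ((n : ℝ) - 1)) * δ) := by rw [Finset.sum_const]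
      _ = ((n : ℝ) - 1) * ((((E : ℝ) - 1) - ((n : ℝ) - 1)) * δ) := by
          rw [hcard j (Finset.mem_Icc.mpr ⟨h1, h2⟩), nsmul_eq_mul,
            Nat.cast_sub (by omega : 1 ≤ n)]
          norm_num
  have hZσ : ∀ j, 1 ≤ j → j ≤ n → ∃ z : ℤ, s j - s' j = (z : ℝ) * δ := by
    intro j h1 h2
    rw [hrepσ j h1 h2]
    apply sum_grid_aux
    intro k hk
    have hk' := Finset.mem_Icc.mp (Finset.mem_of_mem_erase hk)
    exact hZlam k hk'.1 hk'.2
  -- the coefficient function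
  set a : ℕ → ℝ := fun p =>
    if p = 0 then l n - l' n
    else if p = 1 then s n - s' n
    else ∑ k ∈ Finset.Icc (p - 2) (n - 2), (Nat.choose k (p - 2) : ℝ) *
      (s (k - (p - 2) + 1) - s' (k - (p - 2) + 1)) with ha
  have ha0 : a 0 = l n - l' n := by simp [ha]
  have ha1 : a 1 = s n - s' n := by simp [ha]
  have key : ∀ p, 2 ≤ p → a p = ∑ k ∈ Finset.Icc (p - 2) (n - 2),
      (Nat.choose k (p - 2) : ℝ) * (s (k - (p - 2) + 1) - s' (k - (p - 2) + 1)) := by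
    intro p hp
    simp only [ha]
    rw [if_neg (by omega), if_neg (by omega)]
  -- integrality of coefficients
  have hint_a : ∀ p, ∃ z : ℤ, a p = (z : ℝ) * δ := by
    intro p
    by_cases hp0 : p = 0
    · rw [hp0, ha0]; exact hZlam n (by omega) le_rfl
    by_cases hp1 : p = 1
    · rw [hp1, ha1]; exact hZσ n (by omega) le_rfl
    rw [key p (by omega)]
    apply sum_grid_aux
    intro k hk
    rw [Finset.mem_Icc] at hk
    obtain ⟨z, hz⟩ := hZσ (k - (p - 2) + 1) (by omega) (by omega)
    exact ⟨(Nat.choose k (p - 2) : ℤ) * z, by rw [hz]; push_cast; ring⟩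
  -- bound on coefficients
  have hKge1 : (1 : ℝ) ≤ ((n : ℝ) - 1) * ((E : ℝ) - 1) * Cm := bf1
  have hB0 : 0 ≤ ((n : ℝ) - 1) * ((E : ℝ) - 1) * Cm - 1 := by linarith
  have hCmax : ∀ r : ℕ, ((n - 1).choose r : ℝ) ≤ Cm := by
    intro r
    have e1 : (n - 1) - ((n - 1 + 1) / 2) = (n - 1) / 2 := by omega
    have h2 : (n - 1).choose r ≤ (n - 1).choose ((n - 1 + 1) / 2) := by
      calc (n - 1).choose r ≤ (n - 1).choose ((n - 1) / 2) := Nat.choose_le_middle r (n - 1)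
        _ = (n - 1).choose ((n - 1 + 1) / 2) := by
            rw [← e1, Nat.choose_symm (by omega)]
    rw [hCmdef]; exact_mod_cast h2
  have hbd_a : ∀ p, |a p| ≤ (((n : ℝ) - 1) * ((E : ℝ) - 1) * Cm - 1) * δ := by
    intro p
    by_cases hp0 : p = 0
    · rw [hp0, ha0]
      have h1 : ((E : ℝ) - 1) - ((n : ℝ) - 1) ≤ ((n : ℝ) - 1) * ((E : ℝ) - 1) * Cm - 1 := bf2
      calc |l n - l' n| ≤ (((E : ℝ) - 1) - ((n : ℝ) - 1)) * δ := hblam n (by omega) le_rfl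
        _ ≤ (((n : ℝ) - 1) * ((E : ℝ) - 1) * Cm - 1) * δ :=
          mul_le_mul_of_nonneg_right h1 (le_of_lt hδ)
    by_cases hp1 : p = 1
    · rw [hp1, ha1]
      have h1 : ((n : ℝ) - 1) * (((E : ℝ) - 1) - ((n : ℝ) - 1))
          ≤ ((n : ℝ) - 1) * ((E : ℝ) - 1) * Cm - 1 := bf3
      calc |s n - s' n| ≤ ((n : ℝ) - 1) * ((((E : ℝ) - 1) - ((n : ℝ) - 1)) * δ) :=
          hbσ n (by omega) le_rfl
        _ = (((n : ℝ) - 1) * (((E : ℝ) - 1) - ((n : ℝ) - 1))) * δ := by ring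
        _ ≤ (((n : ℝ) - 1) * ((E : ℝ) - 1) * Cm - 1) * δ :=
          mul_le_mul_of_nonneg_right h1 (le_of_lt hδ)
    rw [key p (by omega)]
    by_cases hpn : p ≤ n
    · calc |∑ k ∈ Finset.Icc (p - 2) (n - 2), (Nat.choose k (p - 2) : ℝ) *
            (s (k - (p - 2) + 1) - s' (k - (p - 2) + 1))|
          ≤ ∑ k ∈ Finset.Icc (p - 2) (n - 2), |(Nat.choose k (p - 2) : ℝ) *
            (s (k - (p - 2) + 1) - s' (k - (p - 2) + 1))| := Finset.abs_sum_le_sum_abs _ _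
        _ ≤ ∑ k ∈ Finset.Icc (p - 2) (n - 2), (Nat.choose k (p - 2) : ℝ) *
            (((n : ℝ) - 1) * ((((E : ℝ) - 1) - ((n : ℝ) - 1)) * δ)) := by
            apply Finset.sum_le_sum
            intro k hk
            rw [Finset.mem_Icc] at hk
            rw [abs_mul, abs_of_nonneg (by positivity : (0:ℝ) ≤ (Nat.choose k (p - 2) : ℝ))]
            exact mul_le_mul_of_nonneg_left
              (hbσ (k - (p - 2) + 1) (by omega) (by omega)) (by positivity)
        _ = (((n - 1).choose (p - 1) : ℕ) : ℝ) * (((n : ℝ) - 1) * ((((E : ℝ) - 1) - ((n : ℝ) - 1)) * δ)) := by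
            rw [← Finset.sum_mul, ← Nat.cast_sum, Nat.sum_Icc_choose,
              (by omega : n - 2 + 1 = n - 1), (by omega : p - 2 + 1 = p - 1)]
        _ ≤ Cm * (((n : ℝ) - 1) * ((((E : ℝ) - 1) - ((n : ℝ) - 1)) * δ)) := by
            apply mul_le_mul_of_nonneg_right (hCmax (p - 1))
            positivity
        _ = (Cm * (((n : ℝ) - 1) * (((E : ℝ) - 1) - ((n : ℝ) - 1)))) * δ := by ring
        _ ≤ (((n : ℝ) - 1) * ((E : ℝ) - 1) * Cm - 1) * δ := by
            apply mul_le_mul_of_nonneg_right _ (le_of_lt hδ)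
            exact bf4
    · rw [Finset.Icc_eq_empty (by omega : ¬(p - 2 ≤ n - 2)), Finset.sum_empty]
      rw [abs_zero]
      positivity
  -- the polynomial identity
  have hD : ∑ p ∈ Finset.range (n + 1), a p * c ^ p = 0 := by
    have h2 : n + 1 = n - 1 + 1 + 1 := by omega
    have e1 : ∑ p ∈ Finset.range (n + 1), a p * c ^ p
        = ∑ i ∈ Finset.range (n - 1), a (i + 1 + 1) * c ^ (i + 1 + 1)
          + a (0 + 1) * c ^ (0 + 1) + a 0 * c ^ 0 := by
      rw [h2, Finset.sum_range_succ', Finset.sum_range_succ']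
    rw [e1]
    have e2 : ∀ i ∈ Finset.range (n - 1), a (i + 1 + 1) * c ^ (i + 1 + 1)
        = c ^ (i + 2) * (∑ k ∈ Finset.Icc i (n - 2), (Nat.choose k i : ℝ) * s (k - i + 1))
          - c ^ (i + 2) *
            (∑ k ∈ Finset.Icc i (n - 2), (Nat.choose k i : ℝ) * s' (k - i + 1)) := by
      intro i _
      have hk : a (i + 1 + 1) = ∑ k ∈ Finset.Icc i (n - 2), (Nat.choose k i : ℝ) *
          (s (k - i + 1) - s' (k - i + 1)) := by
        rw [key (i + 1 + 1) (by omega)]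
        have h3 : i + 1 + 1 - 2 = i := by omega
        rw [h3]
      rw [hk, ← mul_sub, ← Finset.sum_sub_distrib]
      rw [mul_comm]
      congr 1
      apply Finset.sum_congr rfl
      intro k _
      ring
    rw [Finset.sum_congr rfl e2, Finset.sum_sub_distrib]
    have h01 : (0 : ℕ) + 1 = 1 := rfl
    rw [h01, ha0, ha1, pow_zero, pow_one]
    linear_combination heq
  -- vanish all coefficients
  have hc1 : 1 < c := by linarith
  have hBc : ((n : ℝ) - 1) * ((E : ℝ) - 1) * Cm - 1 ≤ c - 1 := by linarith
  have hzero := poly_vanish_aux δ c (((n : ℝ) - 1) * ((E : ℝ) - 1) * Cm - 1)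
    hδ hc1 hB0 hBc a hint_a hbd_a (n + 1) hD
  -- extract s = s'
  have hσn : s n - s' n = 0 := by
    have := hzero 1 (by omega); rwa [ha1] at this
  have hσ0 : ∀ j, 1 ≤ j → j ≤ n - 1 → s j - s' j = 0 := by
    intro j
    induction j using Nat.strong_induction_on with
    | _ j ih =>
      intro h1 h2
      have hz := hzero (n + 1 - j) (by omega)
      rw [key (n + 1 - j) (by omega)] at hz
      have hIdx : n + 1 - j - 2 = n - 1 - j := by omega
      rw [hIdx] at hz
      rw [Finset.sum_eq_single_of_mem (n - 2)
        (Finset.mem_Icc.mpr ⟨by omega, le_rfl⟩)] at hz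
      · have hi2 : n - 2 - (n - 1 - j) + 1 = j := by omega
        rw [hi2] at hz
        have hC : (0 : ℝ) < ((n - 2).choose (n - 1 - j) : ℝ) := by
          exact_mod_cast Nat.choose_pos (by omega : n - 1 - j ≤ n - 2)
        rcases mul_eq_zero.mp hz with h | h
        · exact absurd h (ne_of_gt hC)
        · exact h
      · intro k hk hkne
        rw [Finset.mem_Icc] at hk
        rw [ih (k - (n - 1 - j) + 1) (by omega) (by omega) (by omega), mul_zero]
  have hσall : ∀ j, 1 ≤ j → j ≤ n → s j - s' j = 0 := by
    intro j h1 h2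
    rcases eq_or_lt_of_le h2 with he | hlt
    · rw [he]; exact hσn
    · exact hσ0 j h1 (by omega)
  -- conclude l = l', contradiction
  have hTsum : ∀ j, 1 ≤ j → j ≤ n → l j - l' j = ∑ k ∈ Finset.Icc 1 n, (l k - l' k) := by
    intro j h1 h2
    have h := hσall j h1 h2
    rw [hs j, hs' j] at h
    have hsub : ∑ k ∈ Finset.Icc 1 n, (l k - l' k)
        = (∑ k ∈ Finset.Icc 1 n, l k) - ∑ k ∈ Finset.Icc 1 n, l' k :=
      Finset.sum_sub_distrib _ _
    linarith
  set T : ℝ := ∑ k ∈ Finset.Icc 1 n, (l k - l' k) with hT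
  have hTn : T = (n : ℝ) * T := by
    calc T = ∑ k ∈ Finset.Icc 1 n, (l k - l' k) := hT
      _ = ∑ _k ∈ Finset.Icc 1 n, T := Finset.sum_congr rfl (fun k hk => by
          rw [Finset.mem_Icc] at hk
          exact hTsum k hk.1 hk.2)
      _ = (n : ℝ) * T := by
          rw [Finset.sum_const, Nat.card_Icc, nsmul_eq_mul]
          norm_num
  have hT0 : T = 0 := by
    have h1 : ((n : ℝ) - 1) * T = 0 := by linarith
    rcases mul_eq_zero.mp h1 with h | h
    · exact absurd h (by intro h'; linarith)
    · exact h
  obtain ⟨j0, hj1, hj2, hj3⟩ := hne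
  apply hj3
  have := hTsum j0 hj1 hj2
  rw [hT0] at this
  linarith
end

section
/- Contextual mapping theorem: with δ, d, n, c as above (c > (n-1)(δ^{-d}-1)·C(n-1, ⌈(n-1)/2⌉), n ≥ 4), define for each ordered input l the values l̃_j as in the selective-shift recursion and the final output q_j(l) = l̃_j + c^{n+1}·l̃_n. Then q is a contextual mapping: (i) for fixed l, all components q_1(l), …, q_n(l) are pairwise distinct; (ii) for distinct inputs l ≠ l', q_i(l) ≠ q_j(l') for all i, j. -/
open Finset

/-- second-order Bernoulli upper bound -/
lemma aux_bernoulli_sq (x : ℝ) (hx : 0 ≤ x) :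
    ∀ m : ℕ, (m : ℝ) * x ≤ 1 → (1 + x) ^ m ≤ 1 + m * x + (m * x) ^ 2 := by
  intro m
  induction m with
  | zero => intro _; norm_num
  | succ m ih =>
    intro h
    push_cast at h
    have hm : (m : ℝ) * x ≤ 1 := by nlinarith
    have h2 : (1 + x) ^ m ≤ 1 + m * x + (m * x) ^ 2 := ih hm
    have hx1 : (0:ℝ) ≤ 1 + x := by linarith
    have h3 : (1 + x) ^ (m+1) ≤ (1 + m * x + (m * x) ^ 2) * (1 + x) := by
      calc (1 + x) ^ (m+1) = (1 + x) ^ m * (1 + x) := by ring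
      _ ≤ (1 + m * x + (m * x) ^ 2) * (1 + x) := mul_le_mul_of_nonneg_right h2 hx1
    have key : (1 + (m:ℝ) * x + ((m:ℝ) * x) ^ 2) * (1 + x) ≤
        1 + ((m:ℝ)+1) * x + (((m:ℝ)+1) * x) ^ 2 := by
      have hxm : (m:ℝ)^2 * x^3 ≤ ((m:ℝ) + 1) * x^2 := by nlinarith [sq_nonneg x]
      nlinarith [hx]
    push_cast
    linarith

/-- base-c lower bound for nonzero integer-digit expansions -/
lemma aux_digit_lb (c : ℝ) (hc : 2 ≤ c) (e : ℕ → ℤ) (n : ℕ)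
    (hb : ∀ r, r ≤ n → |(e r : ℝ)| ≤ c - 2)
    (hne : ∃ r, r ≤ n ∧ e r ≠ 0) :
    1 ≤ |∑ r ∈ Finset.range (n + 1), (e r : ℝ) * c ^ r| := by
  classical
  -- take R maximal with e R ≠ 0
  obtain ⟨r0, hr0n, hr0⟩ := hne
  have hex : ∃ R, R ≤ n ∧ e R ≠ 0 ∧ ∀ r, R < r → r ≤ n → e r = 0 := by
    by_contra hcon
    push_neg at hcon
    -- find maximal element of the finite set
    have : ∀ k, ∀ r, r ≤ n → e r ≠ 0 → r + k ≤ n → ∃ r', r < r' ∧ r' ≤ n ∧ e r' ≠ 0 := by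
      intro k
      induction k with
      | zero => intro r hr hne0 _;
                obtain ⟨r', hr', hr'n, h0⟩ := hcon r hr hne0; exact ⟨r', hr', hr'n, h0⟩
      | succ k ih =>
        intro r hr hne0 _
        obtain ⟨r', hr', hr'n, h0⟩ := hcon r hr hne0
        exact ⟨r', hr', hr'n, h0⟩
    -- build an infinite ascending chain: contradiction by strong induction on n - r
    have main : ∀ m r, r ≤ n → e r ≠ 0 → n - r ≤ m → False := by
      intro m
      induction m with
      | zero => intro r hr h0 hm
                obtain ⟨r', hr', hr'n, h0'⟩ := hcon r hr h0; omega
      | succ m ih =>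
        intro r hr h0 hm
        obtain ⟨r', hr', hr'n, h0'⟩ := hcon r hr h0
        exact ih r' hr'n h0' (by omega)
    exact main n r0 hr0n hr0 (by omega)
  obtain ⟨R, hRn, hR0, hRmax⟩ := hex
  have hc1 : (1:ℝ) < c := by linarith
  have hsplit : ∑ r ∈ Finset.range (n + 1), (e r : ℝ) * c ^ r
      = (∑ r ∈ Finset.range R, (e r : ℝ) * c ^ r) + (e R : ℝ) * c ^ R := by
    rw [show n + 1 = R + 1 + (n - R) by omega]
    rw [Finset.sum_range_add, Finset.sum_range_succ]
    have : ∑ r ∈ Finset.range (n - R), (e (R + 1 + r) : ℝ) * c ^ (R + 1 + r) = 0 := by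
      apply Finset.sum_eq_zero
      intro r hr
      simp only [Finset.mem_range] at hr
      rw [hRmax (R + 1 + r) (by omega) (by omega)]
      simp
    rw [this]; ring
  have htail : |∑ r ∈ Finset.range R, (e r : ℝ) * c ^ r| ≤ (c - 2) * ((c ^ R - 1)/(c - 1)) := by
    calc |∑ r ∈ Finset.range R, (e r : ℝ) * c ^ r|
        ≤ ∑ r ∈ Finset.range R, |(e r : ℝ) * c ^ r| := Finset.abs_sum_le_sum_abs _ _
      _ ≤ ∑ r ∈ Finset.range R, (c - 2) * c ^ r := by
          apply Finset.sum_le_sum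
          intro r hr
          simp only [Finset.mem_range] at hr
          rw [abs_mul, abs_pow, abs_of_pos (by linarith : (0:ℝ) < c)]
          exact mul_le_mul_of_nonneg_right (hb r (by omega)) (by positivity)
      _ = (c - 2) * ((c ^ R - 1)/(c - 1)) := by
          rw [← Finset.mul_sum, geom_sum_eq (by linarith : c ≠ 1)]
  have hlead : (1:ℝ) ≤ |(e R : ℝ)| := by
    rw [← Int.cast_abs]
    exact_mod_cast Int.one_le_abs (by exact_mod_cast hR0)
  have hcR : (1:ℝ) ≤ c ^ R := one_le_pow₀ (le_of_lt hc1)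
  have hgoal : (c - 2) * ((c ^ R - 1)/(c - 1)) + 1 ≤ c ^ R := by
    set t := (c ^ R - 1)/(c - 1) with ht
    have ht0 : 0 ≤ t := by
      apply div_nonneg <;> linarith
    have htc : t * (c - 1) = c ^ R - 1 := by
      rw [ht, div_mul_cancel₀ _ (by linarith : c - 1 ≠ 0)]
    nlinarith
  rw [hsplit]
  have h1 : |(e R : ℝ) * c ^ R| ≥ c ^ R := by
    rw [abs_mul, abs_pow, abs_of_pos (by linarith : (0:ℝ) < c)]
    nlinarith
  calc (1:ℝ) ≤ c ^ R - (c - 2) * ((c ^ R - 1)/(c - 1)) := by linarith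
    _ ≤ |(e R : ℝ) * c ^ R| - |∑ r ∈ Finset.range R, (e r : ℝ) * c ^ r| := by
        have := htail; linarith
    _ ≤ |(∑ r ∈ Finset.range R, (e r : ℝ) * c ^ r) + (e R : ℝ) * c ^ R| := by
        have := abs_add_le ((∑ r ∈ Finset.range R, (e r : ℝ) * c ^ r)) ((e R : ℝ) * c ^ R)
        have h2 := abs_sub_abs_le_abs_sub ((e R : ℝ) * c ^ R)
          (-(∑ r ∈ Finset.range R, (e r : ℝ) * c ^ r))
        simp only [abs_neg, sub_neg_eq_add] at h2
        have h3 : |(e R : ℝ) * c ^ R + ∑ r ∈ Finset.range R, (e r : ℝ) * c ^ r|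
            = |(∑ r ∈ Finset.range R, (e r : ℝ) * c ^ r) + (e R : ℝ) * c ^ R| := by
          rw [add_comm]
        linarith [h2, h3.le, h3.ge]


set_option maxHeartbeats 1000000 in
/-- Contextual mapping theorem: q_j(l) = l̃_j + c^{n+1}·l̃_n is a contextual mapping. -/
theorem contextual_mapping (n d N : ℕ) (hn : 4 ≤ n) (hd : 1 ≤ d) (hN : 1 ≤ N)
    (δ : ℝ) (hδ : δ > 0) (hδN : (N : ℝ) = δ⁻¹)
    (c : ℝ)
    (hc : c > ((n : ℝ) - 1) * ((δ⁻¹) ^ d - 1) * Nat.choose (n - 1) ((n - 1 + 1) / 2))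
    (l l' s s' lt lt' q q' : ℕ → ℝ)
    (hgrid : ∀ j, 1 ≤ j → j ≤ n → ∃ m : ℕ, m < N ^ d ∧ l j = (m : ℝ) * δ)
    (hgrid' : ∀ j, 1 ≤ j → j ≤ n → ∃ m : ℕ, m < N ^ d ∧ l' j = (m : ℝ) * δ)
    (hmono : ∀ j, 2 ≤ j → j ≤ n → l (j - 1) < l j)
    (hmono' : ∀ j, 2 ≤ j → j ≤ n → l' (j - 1) < l' j)
    (hs : ∀ j, s j = (∑ k ∈ Finset.Icc 1 n, l k) - l j)
    (hs' : ∀ j, s' j = (∑ k ∈ Finset.Icc 1 n, l' k) - l' j)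
    (hlt : ∀ j, lt j = l j + c * s j +
      ∑ i ∈ Finset.range (j - 1), c ^ (i + 2) *
        ∑ k ∈ Finset.Icc i (j - 2), (Nat.choose k i : ℝ) * s (k - i + 1))
    (hlt' : ∀ j, lt' j = l' j + c * s' j +
      ∑ i ∈ Finset.range (j - 1), c ^ (i + 2) *
        ∑ k ∈ Finset.Icc i (j - 2), (Nat.choose k i : ℝ) * s' (k - i + 1))
    (hq : ∀ j, q j = lt j + c ^ (n + 1) * lt n)
    (hq' : ∀ j, q' j = lt' j + c ^ (n + 1) * lt' n) :
    (∀ i j, 1 ≤ i → i ≤ n → 1 ≤ j → j ≤ n → i ≠ j → q i ≠ q j) ∧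
    ((∃ j, 1 ≤ j ∧ j ≤ n ∧ l j ≠ l' j) →
      ∀ i j, 1 ≤ i → i ≤ n → 1 ≤ j → j ≤ n → q i ≠ q' j) := by
  classical
  -- eliminate N = 1
  have hN2 : 2 ≤ N := by
    by_contra hN1
    have hN1' : N = 1 := by omega
    obtain ⟨m1, hm1, hl1⟩ := hgrid 1 le_rfl (by omega)
    obtain ⟨m2, hm2, hl2⟩ := hgrid 2 (by omega) (by omega)
    rw [hN1', one_pow] at hm1 hm2
    have hm10 : m1 = 0 := by omega
    have hm20 : m2 = 0 := by omega
    have h12 := hmono 2 le_rfl (by omega)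
    norm_num at h12
    rw [hl1, hl2, hm10, hm20] at h12
    simp at h12
  -- basic constants
  have hNR : (2:ℝ) ≤ (N:ℝ) := by exact_mod_cast hN2
  have hinv2 : (2:ℝ) ≤ δ⁻¹ := hδN ▸ hNR
  have hδhalf : δ ≤ 1/2 := by
    rw [show (1:ℝ)/2 = 2⁻¹ by norm_num]
    rw [← inv_inv δ]
    exact inv_anti₀ (by norm_num) hinv2
  set P : ℝ := (δ⁻¹)^d - 1 with hPdef
  have hP1 : (1:ℝ) ≤ P := by
    have : (2:ℝ) ≤ (δ⁻¹)^d := by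
      calc (2:ℝ) ≤ δ⁻¹ := hinv2
      _ = (δ⁻¹)^1 := (pow_one _).symm
      _ ≤ (δ⁻¹)^d := pow_le_pow_right₀ (by linarith) hd
    simp only [hPdef]; linarith
  set K : ℝ := ((n:ℝ) - 1) * P with hKdef
  have hn1R : (3:ℝ) ≤ (n:ℝ) - 1 := by
    have : (4:ℝ) ≤ (n:ℝ) := by exact_mod_cast hn
    linarith
  have hK3 : 3 ≤ K := by
    calc (3:ℝ) = 3 * 1 := by norm_num
    _ ≤ ((n:ℝ) - 1) * P := by
        apply mul_le_mul hn1R hP1 (by norm_num) (by linarith)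
  set Cm : ℕ := Nat.choose (n - 1) ((n - 1 + 1) / 2) with hCmdef
  have hCm3 : 3 ≤ Cm := by
    have h1 : 2 ≤ (n - 1 + 1) / 2 := by omega
    have h2 : (n - 1 + 1) / 2 + 1 ≤ n - 1 := by omega
    calc 3 ≤ (n - 1 + 1) / 2 + 1 := by omega
    _ = ((n - 1 + 1) / 2 + 1).choose ((n - 1 + 1) / 2) := by
        rw [Nat.choose_succ_self_right]
    _ ≤ (n-1).choose ((n - 1 + 1) / 2) := Nat.choose_le_choose _ h2
  have hCmR : (3:ℝ) ≤ (Cm:ℝ) := by exact_mod_cast hCm3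
  have hcK : (Cm:ℝ) * K < c := by
    rw [hKdef]
    calc (Cm:ℝ) * (((n:ℝ) - 1) * P) = ((n:ℝ) - 1) * P * (Cm:ℝ) := by ring
    _ < c := hc
  have hc9 : 9 < c := by nlinarith
  have hc0 : (0:ℝ) < c := by linarith
  have hc1 : (1:ℝ) < c := by linarith
  have h3K : 3 * K < c := by nlinarith
  have hnK : (n:ℝ) - 1 ≤ K := by nlinarith
  have hnCm : ((n:ℝ) - 1) * (Cm:ℝ) < c := by nlinarith
  -- grid data
  choose! M hMlt hMl using hgrid
  choose! M' hMlt' hMl' using hgrid'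
  have hNdR : ((N ^ d : ℕ) : ℝ) = (δ⁻¹)^d := by push_cast [hδN]; ring
  -- generic facts for a sequence pack
  have pack : ∀ (l₀ s₀ : ℕ → ℝ) (M₀ : ℕ → ℕ),
      (∀ j, 1 ≤ j → j ≤ n → M₀ j < N ^ d) →
      (∀ j, 1 ≤ j → j ≤ n → l₀ j = (M₀ j : ℝ) * δ) →
      (∀ j, 2 ≤ j → j ≤ n → l₀ (j - 1) < l₀ j) →
      (∀ j, s₀ j = (∑ k ∈ Finset.Icc 1 n, l₀ k) - l₀ j) →
      ((∀ j, 1 ≤ j → j ≤ n → 0 ≤ l₀ j ∧ l₀ j ≤ P * δ) ∧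
       (∀ p r, 1 ≤ p → p < r → r ≤ n → l₀ p < l₀ r) ∧
       (∀ t, 1 ≤ t → t ≤ n → 0 ≤ s₀ t ∧ s₀ t ≤ K * δ) ∧
       (∀ p r, 1 ≤ p → p < r → r ≤ n → M₀ p < M₀ r)) := by
    intro l₀ s₀ M₀ hM₀lt hM₀l hmono₀ hs₀
    have hlb : ∀ j, 1 ≤ j → j ≤ n → 0 ≤ l₀ j ∧ l₀ j ≤ P * δ := by
      intro j h1 h2
      rw [hM₀l j h1 h2]
      constructor
      · positivity
      · have h3 : ((M₀ j : ℕ) : ℝ) + 1 ≤ ((N ^ d : ℕ) : ℝ) := by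
          exact_mod_cast Nat.succ_le_of_lt (hM₀lt j h1 h2)
        rw [hNdR] at h3
        have h4 : (M₀ j : ℝ) ≤ P := by simp only [hPdef]; linarith
        exact mul_le_mul_of_nonneg_right h4 (le_of_lt hδ)
    have hlmono : ∀ p r, 1 ≤ p → p < r → r ≤ n → l₀ p < l₀ r := by
      intro p r hp hpr hrn
      induction r, hpr using Nat.le_induction with
      | base => have := hmono₀ (p + 1) (by omega) hrn; simpa using this
      | succ r hpr ih =>
        have h1 : l₀ p < l₀ r := ih (by omega)
        have h2 := hmono₀ (r + 1) (by omega) hrn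
        simp only [Nat.add_sub_cancel] at h2
        linarith
    refine ⟨hlb, hlmono, ?_, ?_⟩
    · intro t h1 h2
      have htmem : t ∈ Finset.Icc 1 n := by simp [Finset.mem_Icc]; omega
      have hsum : s₀ t = ∑ k ∈ (Finset.Icc 1 n).erase t, l₀ k := by
        rw [hs₀ t, ← Finset.sum_erase_add _ _ htmem]; ring
      have hmem : ∀ x ∈ (Finset.Icc 1 n).erase t, 1 ≤ x ∧ x ≤ n := by
        intro x hx
        have := Finset.mem_of_mem_erase hx
        simp [Finset.mem_Icc] at this; omega
      constructor
      · rw [hsum]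
        apply Finset.sum_nonneg
        intro x hx
        exact (hlb x (hmem x hx).1 (hmem x hx).2).1
      · rw [hsum]
        have hcard : ((Finset.Icc 1 n).erase t).card = n - 1 := by
          rw [Finset.card_erase_of_mem htmem, Nat.card_Icc]; omega
        calc ∑ k ∈ (Finset.Icc 1 n).erase t, l₀ k
            ≤ ((Finset.Icc 1 n).erase t).card • (P * δ) := by
              apply Finset.sum_le_card_nsmul
              intro x hx
              exact (hlb x (hmem x hx).1 (hmem x hx).2).2
          _ = ((n - 1 : ℕ) : ℝ) * (P * δ) := by rw [hcard, nsmul_eq_mul]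
          _ = K * δ := by
              rw [hKdef, Nat.cast_sub (by omega : 1 ≤ n)]
              push_cast; ring
    · intro p r hp hpr hrn
      have h1 : l₀ p < l₀ r := hlmono p r hp hpr hrn
      rw [hM₀l p hp (by omega), hM₀l r (by omega) hrn] at h1
      have h2 : ((M₀ p : ℕ) : ℝ) < ((M₀ r : ℕ) : ℝ) := (mul_lt_mul_iff_left₀ hδ).mp h1
      exact_mod_cast h2
  obtain ⟨hlb, hlmono, hsb, hMmono⟩ := pack l s M hMlt hMl hmono hs
  obtain ⟨hlb', hlmono', hsb', hMmono'⟩ := pack l' s' M' hMlt' hMl' hmono' hs'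
  -- reindexing of inner sums
  have hreindex : ∀ (i T : ℕ) (g : ℕ → ℝ),
      ∑ k ∈ Finset.Icc i T, (Nat.choose k i : ℝ) * g (k - i + 1)
      = ∑ t ∈ Finset.Icc 1 (T + 1 - i), (Nat.choose (i + t - 1) i : ℝ) * g t := by
    intro i T g
    apply Finset.sum_nbij' (fun k => k - i + 1) (fun t => i + t - 1)
    · intro a ha; simp only [Finset.mem_Icc] at *; omega
    · intro a ha; simp only [Finset.mem_Icc] at *; omega
    · intro a ha; simp only [Finset.mem_Icc] at ha; omega
    · intro a ha; simp only [Finset.mem_Icc] at ha; omega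
    · intro a ha
      simp only [Finset.mem_Icc] at ha
      have : i + (a - i + 1) - 1 = a := by omega
      rw [this]
  -- hockey stick, reindexed form
  have hhs : ∀ i T, ∑ t ∈ Finset.Icc 1 (T + 1 - i), (Nat.choose (i + t - 1) i : ℝ)
      = (Nat.choose (T + 1) (i + 1) : ℝ) := by
    intro i T
    by_cases hiT : i ≤ T
    · have h1 : ∑ k ∈ Finset.Icc i T, (Nat.choose k i : ℝ) * (fun _ => (1:ℝ)) (k - i + 1)
          = ∑ t ∈ Finset.Icc 1 (T + 1 - i), (Nat.choose (i + t - 1) i : ℝ) * (fun _ => (1:ℝ)) t :=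
        hreindex i T (fun _ => (1:ℝ))
      simp only [mul_one] at h1
      rw [← h1]
      rw [← Nat.cast_sum]
      rw [Nat.sum_Icc_choose]
    · have h1 : T + 1 - i = 0 := by omega
      have h2 : Nat.choose (T+1) (i+1) = 0 := Nat.choose_eq_zero_of_lt (by omega)
      rw [h1, h2]
      simp
  have hKδ : 0 ≤ K * δ := by positivity
  -- binomial expansion
  have hbinom : (1+c)^(n-1) = ∑ m ∈ Finset.range n, (Nat.choose (n-1) m : ℝ) * c^m := by
    rw [add_comm 1 c]
    have hap := add_pow c 1 (n-1)
    simp only [one_pow, mul_one] at hap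
    rw [hap, show n - 1 + 1 = n by omega]
    apply Finset.sum_congr rfl
    intros; ring
  have hbinom2 : ∑ i ∈ Finset.range (n-1), (Nat.choose (n-1) (i+1) : ℝ) * c^(i+1)
      = (1+c)^(n-1) - 1 := by
    have e1 : ∑ m ∈ Finset.range ((n-1)+1), (Nat.choose (n-1) m : ℝ) * c^m = (1+c)^(n-1) := by
      rw [show (n-1)+1 = n by omega, ← hbinom]
    rw [Finset.sum_range_succ' (fun m => (Nat.choose (n-1) m : ℝ) * c^m) (n-1)] at e1
    simp only [Nat.choose_zero_right, Nat.cast_one, pow_zero, one_mul, mul_one] at e1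
    linarith
  -- upper bound on |lt₀ j|
  have hub : ∀ (l₀ s₀ lt₀ : ℕ → ℝ),
      (∀ j, 1 ≤ j → j ≤ n → 0 ≤ l₀ j ∧ l₀ j ≤ P * δ) →
      (∀ t, 1 ≤ t → t ≤ n → 0 ≤ s₀ t ∧ s₀ t ≤ K * δ) →
      (∀ j, lt₀ j = l₀ j + c * s₀ j +
        ∑ i ∈ Finset.range (j - 1), c ^ (i + 2) *
          ∑ k ∈ Finset.Icc i (j - 2), (Nat.choose k i : ℝ) * s₀ (k - i + 1)) →
      ∀ j, 1 ≤ j → j ≤ n → |lt₀ j| ≤ K * δ * (1 + c * (1 + c) ^ (n - 1)) := by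
    intro l₀ s₀ lt₀ hlb₀ hsb₀ hlt₀ j h1 h2
    have hsval : ∀ i k, i ∈ Finset.range (j-1) → k ∈ Finset.Icc i (j-2) →
        0 ≤ s₀ (k - i + 1) ∧ s₀ (k - i + 1) ≤ K * δ := by
      intro i k hi hk
      simp only [Finset.mem_range] at hi
      simp only [Finset.mem_Icc] at hk
      exact hsb₀ _ (by omega) (by omega)
    have hpos : 0 ≤ lt₀ j := by
      rw [hlt₀ j]
      have h3 := (hlb₀ j h1 h2).1
      have h4 := (hsb₀ j h1 h2).1
      have h5 : 0 ≤ ∑ i ∈ Finset.range (j - 1), c ^ (i + 2) *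
          ∑ k ∈ Finset.Icc i (j - 2), (Nat.choose k i : ℝ) * s₀ (k - i + 1) := by
        apply Finset.sum_nonneg
        intro i hi
        apply mul_nonneg (by positivity)
        apply Finset.sum_nonneg
        intro k hk
        exact mul_nonneg (by positivity) (hsval i k hi hk).1
      have h6 := mul_nonneg (le_of_lt hc0) h4
      linarith
    rw [abs_of_nonneg hpos, hlt₀ j]
    have hB1 : l₀ j ≤ K * δ := by
      have := (hlb₀ j h1 h2).2
      have hPK : P * δ ≤ K * δ := by
        apply mul_le_mul_of_nonneg_right _ (le_of_lt hδ)
        have h7 : 1 * P ≤ ((n:ℝ)-1) * P := mul_le_mul_of_nonneg_right (by linarith) (by linarith)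
        rw [hKdef]; linarith
      linarith
    have hB2 : c * s₀ j ≤ c * (K * δ) := by
      exact mul_le_mul_of_nonneg_left (hsb₀ j h1 h2).2 (le_of_lt hc0)
    have hB3 : ∑ i ∈ Finset.range (j - 1), c ^ (i + 2) *
          ∑ k ∈ Finset.Icc i (j - 2), (Nat.choose k i : ℝ) * s₀ (k - i + 1)
        ≤ K * δ * (c * (1+c)^(n-1) - c) := by
      have step1 : ∀ i ∈ Finset.range (j-1), c ^ (i + 2) *
          ∑ k ∈ Finset.Icc i (j - 2), (Nat.choose k i : ℝ) * s₀ (k - i + 1)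
          ≤ c ^ (i+2) * ((Nat.choose (n-1) (i+1) : ℝ) * (K * δ)) := by
        intro i hi
        simp only [Finset.mem_range] at hi
        apply mul_le_mul_of_nonneg_left _ (by positivity)
        calc ∑ k ∈ Finset.Icc i (j - 2), (Nat.choose k i : ℝ) * s₀ (k - i + 1)
            ≤ ∑ k ∈ Finset.Icc i (j - 2), (Nat.choose k i : ℝ) * (K * δ) := by
              apply Finset.sum_le_sum
              intro k hk
              exact mul_le_mul_of_nonneg_left
                (hsval i k (by simp [Finset.mem_range]; omega) hk).2 (by positivity)
          _ = ((∑ k ∈ Finset.Icc i (j-2), Nat.choose k i : ℕ) : ℝ) * (K * δ) := by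
              rw [← Finset.sum_mul, Nat.cast_sum]
          _ = ((Nat.choose (j-1) (i+1) : ℕ) : ℝ) * (K * δ) := by
              rw [Nat.sum_Icc_choose, show j - 2 + 1 = j - 1 by omega]
          _ ≤ (Nat.choose (n-1) (i+1) : ℝ) * (K * δ) := by
              apply mul_le_mul_of_nonneg_right _ hKδ
              exact_mod_cast Nat.choose_le_choose (i+1) (by omega : j - 1 ≤ n - 1)
      calc ∑ i ∈ Finset.range (j - 1), c ^ (i + 2) *
          ∑ k ∈ Finset.Icc i (j - 2), (Nat.choose k i : ℝ) * s₀ (k - i + 1)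
          ≤ ∑ i ∈ Finset.range (j-1), c ^ (i+2) * ((Nat.choose (n-1) (i+1) : ℝ) * (K * δ)) :=
            Finset.sum_le_sum step1
        _ ≤ ∑ i ∈ Finset.range (n-1), c ^ (i+2) * ((Nat.choose (n-1) (i+1) : ℝ) * (K * δ)) := by
            apply Finset.sum_le_sum_of_subset_of_nonneg
            · exact Finset.range_subset_range.mpr (by omega)
            · intro i _ _; positivity
        _ = (K * δ) * (c * ∑ i ∈ Finset.range (n-1), (Nat.choose (n-1) (i+1) : ℝ) * c^(i+1)) := by
            rw [Finset.mul_sum, Finset.mul_sum]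
            apply Finset.sum_congr rfl
            intros; ring
        _ = K * δ * (c * (1+c)^(n-1) - c) := by rw [hbinom2]; ring
    have expand : K*δ*(c*(1+c)^(n-1) - c) = K*δ*(1 + c*(1+c)^(n-1)) - K*δ - c*(K*δ) := by ring
    linarith [hB1, hB2, hB3]
  -- the key numeric inequality
  have hnum : 2 * (K * δ * (1 + c * (1 + c) ^ (n - 1))) < c ^ (n + 1) * δ := by
    have hx : (0:ℝ) ≤ 1/c := by positivity
    have hmx : ((n - 1 : ℕ) : ℝ) * (1/c) ≤ 1 := by
      rw [Nat.cast_sub (by omega : 1 ≤ n)]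
      push_cast
      rw [mul_one_div, div_le_one hc0]
      linarith
    have hbern := aux_bernoulli_sq (1/c) hx (n-1) hmx
    have hcast : ((n - 1 : ℕ) : ℝ) = (n:ℝ) - 1 := by
      rw [Nat.cast_sub (by omega : 1 ≤ n)]; push_cast; ring
    rw [hcast] at hbern
    have hthird : ((n:ℝ) - 1) * (1/c) ≤ 1/3 := by
      rw [mul_one_div, div_le_div_iff₀ hc0 (by norm_num)]
      linarith
    have h139 : (1 + 1/c)^(n-1) ≤ 13/9 := by
      have hnn : 0 ≤ ((n:ℝ) - 1) * (1/c) := mul_nonneg (by linarith) hx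
      have hsq : (((n:ℝ) - 1) * (1/c))^2 ≤ (1/3)^2 := by
        apply sq_le_sq'
        · linarith
        · exact hthird
      calc (1 + 1/c)^(n-1) ≤ 1 + ((n:ℝ)-1)*(1/c) + (((n:ℝ)-1)*(1/c))^2 := hbern
      _ ≤ 1 + 1/3 + (1/3)^2 := by linarith
      _ ≤ 13/9 := by norm_num
    set X := c^(n-1) with hXdef
    have hXpos : 0 < X := pow_pos hc0 _
    have hX : c ≤ X := by
      rw [hXdef]
      calc c = c^1 := (pow_one c).symm
      _ ≤ c^(n-1) := pow_le_pow_right₀ (le_of_lt hc1) (by omega)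
    have hsplit : (1 + c)^(n-1) = X * (1 + 1/c)^(n-1) := by
      rw [hXdef, ← mul_pow]
      congr 1
      field_simp
      ring
    have hup : (1+c)^(n-1) ≤ (13/9) * X := by
      rw [hsplit]
      calc X * (1 + 1/c)^(n-1) ≤ X * (13/9) := by
            exact mul_le_mul_of_nonneg_left h139 (le_of_lt hXpos)
      _ = (13/9) * X := by ring
    have hpow : c^(n+1) = X * c * c := by
      rw [hXdef, ← pow_succ, ← pow_succ]
      congr 1
      omega
    rw [hpow]
    have key : 2*K*δ*c*(1+c)^(n-1) ≤ 2*K*δ*c*((13/9)*X) :=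
      mul_le_mul_of_nonneg_left hup (by positivity)
    have h26 : (26/9)*K*(c*X*δ) ≤ (26/27)*c*(c*X*δ) := by
      apply mul_le_mul_of_nonneg_right _ (by positivity)
      linarith
    have h81 : 81 < c * X := by
      have h9X : 9 < X := lt_of_lt_of_le hc9 hX
      calc (81:ℝ) = 9 * 9 := by norm_num
      _ < c * X := by
          apply mul_lt_mul hc9 (le_of_lt h9X) (by norm_num) (le_of_lt hc0)
    have hfin : 2*K*δ < (1/27)*c*(c*X*δ) := by
      have h2K : 2*K*δ ≤ (2/3)*c*δ := by
        have := mul_le_mul_of_nonneg_right (show 2*K ≤ (2/3)*c by linarith) (le_of_lt hδ)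
        linarith
      have : (2/3)*c*δ < (1/27)*c*(c*X*δ) := by
        have hcc : (0:ℝ) < c * δ := by positivity
        calc (2/3)*c*δ = 18 * ((1/27) * (c*δ)) := by ring
        _ < (c*X) * ((1/27) * (c*δ)) := by
            apply mul_lt_mul_of_pos_right _ (by positivity)
            linarith
        _ = (1/27)*c*(c*X*δ) := by ring
      linarith
    calc 2 * (K * δ * (1 + c * (1 + c) ^ (n - 1)))
        = 2*K*δ + 2*K*δ*c*(1+c)^(n-1) := by ring
      _ ≤ 2*K*δ + 2*K*δ*c*((13/9)*X) := by linarith [key]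
      _ = 2*K*δ + (26/9)*K*(c*X*δ) := by ring
      _ ≤ 2*K*δ + (26/27)*c*(c*X*δ) := by linarith [h26]
      _ < (1/27)*c*(c*X*δ) + (26/27)*c*(c*X*δ) := by linarith [hfin]
      _ = X * c * c * δ := by ring
  -- l r ≤ s 1 for r ≥ 2
  have hs1ub : ∀ r, 2 ≤ r → r ≤ n → l r ≤ s 1 := by
    intro r h2 hrn
    have h1mem : (1:ℕ) ∈ Finset.Icc 1 n := by simp [Finset.mem_Icc]; omega
    have hsum : s 1 = ∑ k ∈ (Finset.Icc 1 n).erase 1, l k := by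
      rw [hs 1, ← Finset.sum_erase_add _ _ h1mem]; ring
    rw [hsum]
    apply Finset.single_le_sum
    · intro x hx
      have := Finset.mem_of_mem_erase hx
      simp only [Finset.mem_Icc] at this
      exact (hlb x this.1 this.2).1
    · simp [Finset.mem_erase, Finset.mem_Icc]; omega
  -- one-step monotonicity of lt
  have hstep : ∀ j, 1 ≤ j → j + 1 ≤ n → lt j < lt (j + 1) := by
    intro j h1 h2
    rcases Nat.lt_or_ge j 2 with hj | hj
    · -- j = 1
      have hj1 : j = 1 := by omega
      subst hj1
      have e1 : lt 1 = l 1 + c * s 1 := by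
        rw [hlt 1]; norm_num
      have e2 : lt 2 = l 2 + c * s 2 + c^2 * s 1 := by
        rw [hlt 2]
        norm_num [Finset.sum_range_one]
      have h12 : l 1 < l 2 := hlmono 1 2 le_rfl (by omega) h2
      have hl2s1 : l 2 ≤ s 1 := hs1ub 2 le_rfl h2
      have hl10 : 0 ≤ l 1 := (hlb 1 le_rfl (by omega)).1
      have hcs : c * s 2 - c * s 1 = c * l 1 - c * l 2 := by rw [hs 1, hs 2]; ring
      have hfact : 0 < (c^2 - c + 1) * (l 2 - l 1) :=
        mul_pos (by nlinarith [sq_nonneg (c-1)]) (by linarith)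
      have hkey2 : c^2 * l 2 ≤ c^2 * s 1 := mul_le_mul_of_nonneg_left hl2s1 (sq_nonneg c)
      have hl1c : 0 ≤ c^2 * l 1 := mul_nonneg (sq_nonneg c) hl10
      rw [e1, e2]
      nlinarith [hcs, hfact, hkey2, hl1c]
    · obtain ⟨J, rfl⟩ : ∃ J, j = J + 2 := ⟨j - 2, by omega⟩
      have split1 : ∑ i ∈ Finset.range (J+2), c^(i+2) *
            ∑ k ∈ Finset.Icc i (J+1), (Nat.choose k i : ℝ) * s (k-i+1)
          = (∑ i ∈ Finset.range (J+1), c^(i+2) *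
              ∑ k ∈ Finset.Icc i J, (Nat.choose k i : ℝ) * s (k-i+1))
            + ((∑ i ∈ Finset.range (J+1), c^(i+2) * ((Nat.choose (J+1) i : ℝ) * s (J+2-i)))
            + c^(J+3) * s 1) := by
        rw [Finset.sum_range_succ]
        have e1 : ∀ i ∈ Finset.range (J+1), c^(i+2) *
              ∑ k ∈ Finset.Icc i (J+1), (Nat.choose k i : ℝ) * s (k-i+1)
            = c^(i+2) * ∑ k ∈ Finset.Icc i J, (Nat.choose k i : ℝ) * s (k-i+1)
              + c^(i+2) * ((Nat.choose (J+1) i : ℝ) * s (J+2-i)) := by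
          intro i hi
          simp only [Finset.mem_range] at hi
          rw [Finset.sum_Icc_succ_top (by omega : i ≤ J+1)]
          rw [show J+1-i+1 = J+2-i by omega]
          ring
        rw [Finset.sum_congr rfl e1, Finset.sum_add_distrib]
        rw [Finset.Icc_self, Finset.sum_singleton, Nat.choose_self,
          show J+1-(J+1)+1 = 1 by omega]
        push_cast; ring
      have e3 : lt (J+3) = l (J+3) + c * s (J+3) + ∑ i ∈ Finset.range (J+2), c^(i+2) *
            ∑ k ∈ Finset.Icc i (J+1), (Nat.choose k i : ℝ) * s (k-i+1) := by
        rw [hlt (J+3), show J+3-1 = J+2 by omega, show J+3-2 = J+1 by omega]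
      have e4 : lt (J+2) = l (J+2) + c * s (J+2) + ∑ i ∈ Finset.range (J+1), c^(i+2) *
            ∑ k ∈ Finset.Icc i J, (Nat.choose k i : ℝ) * s (k-i+1) := by
        rw [hlt (J+2), show J+2-1 = J+1 by omega, show J+2-2 = J by omega]
      have hmid : 0 ≤ ∑ i ∈ Finset.range (J+1), c^(i+2) * ((Nat.choose (J+1) i : ℝ) * s (J+2-i)) := by
        apply Finset.sum_nonneg
        intro i hi
        simp only [Finset.mem_range] at hi
        have hsval : 0 ≤ s (J+2-i) := (hsb (J+2-i) (by omega) (by omega)).1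
        positivity
      have h12 : l (J+2) < l (J+3) := hlmono (J+2) (J+3) (by omega) (by omega) (by omega)
      have hl2s1 : l (J+3) ≤ s 1 := hs1ub (J+3) (by omega) (by omega)
      have hl10 : 0 ≤ l (J+2) := (hlb (J+2) (by omega) (by omega)).1
      have hs10 : 0 ≤ s 1 := (hsb 1 le_rfl (by omega)).1
      have hcs : c * s (J+3) - c * s (J+2) = c * l (J+2) - c * l (J+3) := by
        rw [hs (J+2), hs (J+3)]; ring
      have hc2J : c^2 ≤ c^(J+3) := pow_le_pow_right₀ (le_of_lt hc1) (by omega)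
      have hkey : c^2 * s 1 ≤ c^(J+3) * s 1 := mul_le_mul_of_nonneg_right hc2J hs10
      have hkey2 : c^2 * (l (J+3)) ≤ c^2 * s 1 := mul_le_mul_of_nonneg_left hl2s1 (sq_nonneg c)
      have hfact : 0 < (c^2 - c + 1) * (l (J+3) - l (J+2)) :=
        mul_pos (by nlinarith [sq_nonneg (c-1)]) (by linarith)
      have hl1c : 0 ≤ c^2 * l (J+2) := mul_nonneg (sq_nonneg c) hl10
      rw [e3, e4, split1]
      linarith [hcs, hfact, hkey2, hl1c, hkey, hmid]
  -- full monotonicity of lt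
  have hltmono : ∀ p r, 1 ≤ p → p < r → r ≤ n → lt p < lt r := by
    intro p r hp hpr hrn
    induction r, hpr using Nat.le_induction with
    | base => exact hstep p hp hrn
    | succ r hpr ih =>
      have h1 : lt p < lt r := ih (by omega)
      have h2 := hstep r (by omega) hrn
      linarith
  -- integer differences
  obtain ⟨aZ, haZ⟩ : ∃ aZ : ℕ → ℤ, ∀ k, aZ k = (M k : ℤ) - (M' k : ℤ) := ⟨_, fun _ => rfl⟩
  obtain ⟨A, hA⟩ : ∃ A : ℤ, A = ∑ k ∈ Finset.Icc 1 n, aZ k := ⟨_, rfl⟩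
  have hMP : ∀ k, 1 ≤ k → k ≤ n → ((M k : ℝ) ≤ P ∧ (M' k : ℝ) ≤ P) := by
    intro k h1 h2
    constructor
    · have h3 : ((M k : ℕ) : ℝ) + 1 ≤ ((N ^ d : ℕ) : ℝ) := by
        exact_mod_cast Nat.succ_le_of_lt (hMlt k h1 h2)
      rw [hNdR] at h3
      simp only [hPdef]; linarith
    · have h3 : ((M' k : ℕ) : ℝ) + 1 ≤ ((N ^ d : ℕ) : ℝ) := by
        exact_mod_cast Nat.succ_le_of_lt (hMlt' k h1 h2)
      rw [hNdR] at h3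
      simp only [hPdef]; linarith
  have hldiff : ∀ k, 1 ≤ k → k ≤ n → l k - l' k = δ * (aZ k : ℝ) := by
    intro k h1 h2
    rw [hMl k h1 h2, hMl' k h1 h2, haZ k]
    push_cast; ring
  have hsdiff : ∀ t, 1 ≤ t → t ≤ n → s t - s' t = δ * ((A : ℝ) - (aZ t : ℝ)) := by
    intro t h1 h2
    rw [hs t, hs' t]
    have hsum : (∑ k ∈ Finset.Icc 1 n, l k) - (∑ k ∈ Finset.Icc 1 n, l' k) = δ * (A:ℝ) := by
      rw [← Finset.sum_sub_distrib, hA]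
      push_cast
      rw [Finset.mul_sum]
      apply Finset.sum_congr rfl
      intro k hk
      simp only [Finset.mem_Icc] at hk
      exact hldiff k hk.1 hk.2
    have := hldiff t h1 h2
    linarith
  -- the digits
  obtain ⟨e, he0, he1, he2⟩ : ∃ e : ℕ → ℤ, e 0 = aZ n ∧ e 1 = A - aZ n ∧
      ∀ r, 2 ≤ r → e r = ∑ t ∈ Finset.Icc 1 (n+1-r),
        ((r-2+t-1).choose (r-2) : ℤ) * (A - aZ t) := by
    refine ⟨fun r => if r = 0 then aZ n else if r = 1 then A - aZ n else
      ∑ t ∈ Finset.Icc 1 (n+1-r), ((r-2+t-1).choose (r-2) : ℤ) * (A - aZ t), rfl, rfl, ?_⟩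
    intro r hr
    simp only [if_neg (by omega : ¬ r = 0), if_neg (by omega : ¬ r = 1)]
  -- the difference identity
  have hinner : ∀ i, i ∈ Finset.range (n-1) →
      (∑ k ∈ Finset.Icc i (n-2), (Nat.choose k i : ℝ) * s (k-i+1))
      - (∑ k ∈ Finset.Icc i (n-2), (Nat.choose k i : ℝ) * s' (k-i+1))
      = δ * ((e (i+2) : ℤ) : ℝ) := by
    intro i hi
    simp only [Finset.mem_range] at hi
    rw [← Finset.sum_sub_distrib]
    have step : ∀ k ∈ Finset.Icc i (n-2),
        (Nat.choose k i : ℝ) * s (k-i+1) - (Nat.choose k i : ℝ) * s' (k-i+1)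
        = (Nat.choose k i : ℝ) * ((fun t => δ * ((A:ℝ) - (aZ t : ℝ))) (k-i+1)) := by
      intro k hk
      simp only [Finset.mem_Icc] at hk
      rw [← mul_sub, hsdiff (k-i+1) (by omega) (by omega)]
    rw [Finset.sum_congr rfl step]
    rw [hreindex i (n-2) (fun t => δ * ((A:ℝ) - (aZ t : ℝ)))]
    rw [he2 (i+2) (by omega)]
    push_cast
    rw [Finset.mul_sum, show n-2+1-i = n - (i+1) by omega]
    exact Finset.sum_congr rfl (fun t ht => by ring)
  have hpeel : ∑ r ∈ Finset.range (n+1), ((e r : ℤ) : ℝ)*c^r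
      = (∑ i ∈ Finset.range (n-1), ((e (i+2) : ℤ):ℝ)*c^(i+2)) + ((e 1:ℤ):ℝ)*c^1 + ((e 0:ℤ):ℝ)*c^0 := by
    rw [show n + 1 = (n-1) + 1 + 1 by omega]
    rw [Finset.sum_range_succ' (fun r => ((e r : ℤ) : ℝ)*c^r) ((n-1)+1)]
    rw [Finset.sum_range_succ' (fun r => ((e (r+1) : ℤ) : ℝ)*c^(r+1)) (n-1)]
  have hdiff_lt : lt n - lt' n = δ * ∑ r ∈ Finset.range (n+1), ((e r : ℤ) : ℝ) * c^r := by
    have hbig : (∑ i ∈ Finset.range (n-1), c^(i+2) *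
          ∑ k ∈ Finset.Icc i (n-2), (Nat.choose k i : ℝ) * s (k-i+1))
        - (∑ i ∈ Finset.range (n-1), c^(i+2) *
          ∑ k ∈ Finset.Icc i (n-2), (Nat.choose k i : ℝ) * s' (k-i+1))
        = ∑ i ∈ Finset.range (n-1), δ * ((e (i+2):ℤ):ℝ) * c^(i+2) := by
      rw [← Finset.sum_sub_distrib]
      apply Finset.sum_congr rfl
      intro i hi
      rw [← mul_sub, hinner i hi]
      ring
    have hld : l n - l' n = δ * ((aZ n : ℤ):ℝ) := hldiff n (by omega) le_rfl
    have hsd : s n - s' n = δ * ((A:ℝ) - ((aZ n : ℤ):ℝ)) := hsdiff n (by omega) le_rfl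
    have hfold : ∑ i ∈ Finset.range (n-1), δ * ((e (i+2):ℤ):ℝ) * c^(i+2)
        = δ * ∑ i ∈ Finset.range (n-1), ((e (i+2):ℤ):ℝ) * c^(i+2) := by
      rw [Finset.mul_sum]
      exact Finset.sum_congr rfl (fun i _ => by ring)
    calc lt n - lt' n
        = (l n - l' n) + c * (s n - s' n)
          + ((∑ i ∈ Finset.range (n-1), c^(i+2) *
              ∑ k ∈ Finset.Icc i (n-2), (Nat.choose k i : ℝ) * s (k-i+1))
            - ∑ i ∈ Finset.range (n-1), c^(i+2) *
              ∑ k ∈ Finset.Icc i (n-2), (Nat.choose k i : ℝ) * s' (k-i+1)) := by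
          rw [hlt n, hlt' n]; ring
      _ = δ * ((aZ n : ℤ):ℝ) + c * (δ * ((A:ℝ) - ((aZ n : ℤ):ℝ)))
          + ∑ i ∈ Finset.range (n-1), δ * ((e (i+2):ℤ):ℝ) * c^(i+2) := by
          rw [hld, hsd, hbig]
      _ = δ * ((∑ i ∈ Finset.range (n-1), ((e (i+2):ℤ):ℝ)*c^(i+2))
            + ((e 1:ℤ):ℝ)*c^1 + ((e 0:ℤ):ℝ)*c^0) := by
          rw [hfold, he0, he1]
          push_cast
          ring
      _ = δ * ∑ r ∈ Finset.range (n+1), ((e r : ℤ) : ℝ) * c^r := by rw [hpeel]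
  -- |aZ k| ≤ P
  have haZb : ∀ k, 1 ≤ k → k ≤ n → |(aZ k : ℝ)| ≤ P := by
    intro k h1 h2
    obtain ⟨hMk, hM'k⟩ := hMP k h1 h2
    rw [haZ k]
    push_cast
    rw [abs_le]
    constructor
    · linarith [Nat.cast_nonneg (M k) (α := ℝ)]
    · linarith [Nat.cast_nonneg (M' k) (α := ℝ)]
  -- refined bound |A - aZ t| ≤ K - 1
  have hAt : ∀ t, 1 ≤ t → t ≤ n → |(A:ℝ) - (aZ t : ℝ)| ≤ K - 1 := by
    intro t h1 h2
    have htmem : t ∈ Finset.Icc 1 n := by simp [Finset.mem_Icc]; omega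
    have hAe : (A:ℝ) - (aZ t:ℝ) = ∑ k ∈ (Finset.Icc 1 n).erase t, (aZ k : ℝ) := by
      have hAR : (A:ℝ) = ∑ k ∈ Finset.Icc 1 n, (aZ k:ℝ) := by rw [hA]; push_cast; ring
      rw [hAR, ← Finset.sum_erase_add _ _ htmem]; ring
    set k₀ : ℕ := if t = 1 then 2 else 1 with hk₀def
    have hk₀n : 1 ≤ k₀ ∧ k₀ ≤ n ∧ k₀ ≠ t := by
      rw [hk₀def]; split_ifs with h <;> omega
    have hk₀mem : k₀ ∈ (Finset.Icc 1 n).erase t := by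
      simp only [Finset.mem_erase, Finset.mem_Icc]
      omega
    have hbk₀ : |(aZ k₀ : ℝ)| ≤ P - 1 := by
      have h12 : M 1 < M 2 := hMmono 1 2 le_rfl one_lt_two (by omega)
      have h12' : M' 1 < M' 2 := hMmono' 1 2 le_rfl one_lt_two (by omega)
      have h23 : M 2 < M 3 := hMmono 2 3 (by omega) (by omega) (by omega)
      have h23' : M' 2 < M' 3 := hMmono' 2 3 (by omega) (by omega) (by omega)
      obtain ⟨hM2, hM'2⟩ := hMP 2 (by omega) (by omega)
      obtain ⟨hM3, hM'3⟩ := hMP 3 (by omega) (by omega)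
      rw [haZ k₀, hk₀def]
      split_ifs with h
      · have e1 : (M 2:ℝ) + 1 ≤ (M 3:ℝ) := by exact_mod_cast h23
        have e2 : (M' 2:ℝ) + 1 ≤ (M' 3:ℝ) := by exact_mod_cast h23'
        have e3 : (1:ℝ) ≤ (M 2:ℝ) := by exact_mod_cast (show 1 ≤ M 2 by omega)
        have e4 : (1:ℝ) ≤ (M' 2:ℝ) := by exact_mod_cast (show 1 ≤ M' 2 by omega)
        push_cast
        rw [abs_le]
        constructor <;> linarith
      · have e1 : (M 1:ℝ) + 1 ≤ (M 2:ℝ) := by exact_mod_cast h12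
        have e2 : (M' 1:ℝ) + 1 ≤ (M' 2:ℝ) := by exact_mod_cast h12'
        push_cast
        rw [abs_le]
        constructor <;>
          linarith [Nat.cast_nonneg (M 1) (α := ℝ), Nat.cast_nonneg (M' 1) (α := ℝ)]
    have hrest : ∑ k ∈ ((Finset.Icc 1 n).erase t).erase k₀, |(aZ k : ℝ)|
        ≤ ((n:ℝ) - 2) * P := by
      have hcard : (((Finset.Icc 1 n).erase t).erase k₀).card = n - 2 := by
        rw [Finset.card_erase_of_mem hk₀mem, Finset.card_erase_of_mem htmem, Nat.card_Icc]
        omega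
      calc ∑ k ∈ ((Finset.Icc 1 n).erase t).erase k₀, |(aZ k : ℝ)|
          ≤ (((Finset.Icc 1 n).erase t).erase k₀).card • P := by
            apply Finset.sum_le_card_nsmul
            intro x hx
            have hx1 := Finset.mem_of_mem_erase (Finset.mem_of_mem_erase hx)
            simp only [Finset.mem_Icc] at hx1
            exact haZb x hx1.1 hx1.2
        _ = ((n-2:ℕ):ℝ) * P := by rw [hcard, nsmul_eq_mul]
        _ = ((n:ℝ)-2) * P := by rw [Nat.cast_sub (by omega)]; norm_num
    have hsum2 : |(A:ℝ) - (aZ t:ℝ)|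
        ≤ |(aZ k₀:ℝ)| + ∑ k ∈ ((Finset.Icc 1 n).erase t).erase k₀, |(aZ k:ℝ)| := by
      rw [hAe]
      calc |∑ k ∈ (Finset.Icc 1 n).erase t, (aZ k : ℝ)|
          ≤ ∑ k ∈ (Finset.Icc 1 n).erase t, |(aZ k : ℝ)| := Finset.abs_sum_le_sum_abs _ _
        _ = |(aZ k₀:ℝ)| + ∑ k ∈ ((Finset.Icc 1 n).erase t).erase k₀, |(aZ k:ℝ)| := by
            rw [← Finset.add_sum_erase _ _ hk₀mem]
    have hKexp : (P - 1) + ((n:ℝ)-2)*P = K - 1 := by rw [hKdef]; ring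
    linarith
  -- binomial coefficient bound
  have hCmid : ∀ r, Nat.choose (n-1) r ≤ Cm := by
    intro r
    have h1 := Nat.choose_le_middle r (n-1)
    have h2 : Nat.choose (n-1) ((n-1)/2) = Cm := by
      rw [hCmdef, ← Nat.choose_symm (show (n-1)/2 ≤ n-1 by omega)]
      congr 1
      omega
    omega
  -- digit bounds
  have hbound : ∀ r, r ≤ n → |((e r : ℤ):ℝ)| ≤ c - 2 := by
    intro r hr
    rcases Nat.lt_or_ge r 2 with h2 | h2
    · interval_cases r
      · rw [he0]
        have hb := haZb n (by omega) le_rfl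
        have hPK : P ≤ K := by
          have := mul_le_mul_of_nonneg_right (show (1:ℝ) ≤ (n:ℝ)-1 by linarith)
            (show (0:ℝ) ≤ P by linarith)
          rw [hKdef]; linarith
        linarith
      · rw [he1]
        have hb := hAt n (by omega) le_rfl
        push_cast
        push_cast at hb
        linarith
    · rw [he2 r h2]
      push_cast
      have hmemb : ∀ t ∈ Finset.Icc 1 (n+1-r), 1 ≤ t ∧ t ≤ n := by
        intro t ht
        simp only [Finset.mem_Icc] at ht
        omega
      calc |∑ t ∈ Finset.Icc 1 (n+1-r), ((r-2+t-1).choose (r-2):ℝ) * ((A:ℝ) - (aZ t:ℝ))|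
          ≤ ∑ t ∈ Finset.Icc 1 (n+1-r), |((r-2+t-1).choose (r-2):ℝ) * ((A:ℝ) - (aZ t:ℝ))| :=
            Finset.abs_sum_le_sum_abs _ _
        _ ≤ ∑ t ∈ Finset.Icc 1 (n+1-r), ((r-2+t-1).choose (r-2):ℝ) * (K - 1) := by
            apply Finset.sum_le_sum
            intro t ht
            rw [abs_mul, Nat.abs_cast]
            exact mul_le_mul_of_nonneg_left (hAt t (hmemb t ht).1 (hmemb t ht).2)
              (Nat.cast_nonneg _)
        _ = (∑ t ∈ Finset.Icc 1 (n+1-r), ((r-2+t-1).choose (r-2):ℝ)) * (K - 1) := by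
            rw [← Finset.sum_mul]
        _ = ((n-1).choose (r-1) : ℝ) * (K - 1) := by
            rw [show n+1-r = n-2+1-(r-2) by omega, hhs (r-2) (n-2),
              show n-2+1 = n-1 by omega, show r-2+1 = r-1 by omega]
        _ ≤ (Cm:ℝ) * (K - 1) := by
            apply mul_le_mul_of_nonneg_right _ (by linarith)
            exact_mod_cast hCmid (r-1)
        _ ≤ c - 2 := by
            have hexp : (Cm:ℝ) * (K - 1) = (Cm:ℝ)*K - (Cm:ℝ) := by ring
            linarith
  -- conclusion
  refine ⟨?_, ?_⟩
  · intro i j h1i h2i h1j h2j hij heq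
    have heqlt : lt i = lt j := by
      rw [hq i, hq j] at heq
      linarith
    rcases lt_trichotomy i j with h | h | h
    · exact absurd heqlt (ne_of_lt (hltmono i j h1i h h2j))
    · exact hij h
    · exact absurd heqlt.symm (ne_of_lt (hltmono j i h1j h h2i))
  · intro hexists i j h1i h2i h1j h2j heq
    obtain ⟨j₀, hj₀1, hj₀n, hj₀⟩ := hexists
    have hj₀a : aZ j₀ ≠ 0 := by
      intro h0
      apply hj₀
      have h3 := hldiff j₀ hj₀1 hj₀n
      rw [h0] at h3
      push_cast at h3
      linarith
    have hne : ∃ r, r ≤ n ∧ e r ≠ 0 := by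
      by_contra hcon
      push_neg at hcon
      have h00 : aZ n = 0 := by have := hcon 0 (by omega); rwa [he0] at this
      have hA0 : A = 0 := by
        have := hcon 1 (by omega)
        rw [he1, h00] at this
        omega
      have hzero : ∀ t, 1 ≤ t → t ≤ n - 1 → aZ t = 0 := by
        intro t
        induction t using Nat.strong_induction_on with
        | _ t ih =>
          intro h1t h2t
          have hrt := hcon (n+1-t) (by omega)
          rw [he2 (n+1-t) (by omega), show n+1-(n+1-t) = t by omega] at hrt
          have hsingle : ∑ t' ∈ Finset.Icc 1 t,
              ((n+1-t-2+t'-1).choose (n+1-t-2) : ℤ) * (A - aZ t')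
              = ((n+1-t-2+t-1).choose (n+1-t-2) : ℤ) * (A - aZ t) := by
            apply Finset.sum_eq_single_of_mem t (by simp [Finset.mem_Icc]; omega)
            intro b hb hbt
            simp only [Finset.mem_Icc] at hb
            rw [hA0, ih b (by omega) hb.1 (by omega)]
            ring
          rw [hsingle, hA0] at hrt
          have hchoosepos : 0 < (n+1-t-2+t-1).choose (n+1-t-2) := Nat.choose_pos (by omega)
          rcases mul_eq_zero.mp hrt with h | h
          · exfalso
            have : (n+1-t-2+t-1).choose (n+1-t-2) = 0 := by exact_mod_cast h
            omega
          · omega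
      rcases Nat.lt_or_ge j₀ n with h | h
      · exact hj₀a (hzero j₀ hj₀1 (by omega))
      · have hj₀eq : j₀ = n := by omega
        rw [hj₀eq] at hj₀a
        exact hj₀a h00
    have hdig := aux_digit_lb c (by linarith) e n hbound hne
    have habs : δ ≤ |lt n - lt' n| := by
      rw [hdiff_lt, abs_mul, abs_of_pos hδ]
      nlinarith [hdig, hδ]
    rw [hq i, hq' j] at heq
    have hkey : c^(n+1) * (lt n - lt' n) = lt' j - lt i := by linarith
    have hub_i := hub l s lt hlb hsb hlt i h1i h2i
    have hub_j := hub l' s' lt' hlb' hsb' hlt' j h1j h2j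
    have h1 : c^(n+1)*δ ≤ c^(n+1)*|lt n - lt' n| :=
      mul_le_mul_of_nonneg_left habs (le_of_lt (pow_pos hc0 _))
    have h2 : |lt' j - lt i| ≤ |lt' j| + |lt i| := by
      rw [sub_eq_add_neg]
      exact (abs_add_le _ _).trans (by rw [abs_neg])
    have h3 : c^(n+1)*|lt n - lt' n| = |lt' j - lt i| := by
      rw [← hkey, abs_mul, abs_pow, abs_of_pos hc0]
    linarith [hnum]
end
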